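/- arXiv:2010.07452 — 7 statements merged into one kernel-verified Lean document; each statement's English description precedes it below -/
import Mathlib

section
/- Let X be a Borel subset of ℝ^m, Y a finite set, U a finite set, T a transition kernel from X×U to X and Q an observation kernel from X to Y. Assume that for some α_X < ∞ one has ‖T(·|x,u) − T(·|x',u)‖_TV ≤ α_X |x − x'| for all x, x' ∈ X and all u ∈ U, and let δ(Q) = inf_{x,x'∈X} Σ_{y∈Y} min(Q(y|x), Q(y|x')) be the Dobrushin coefficient of Q. Then for every z, z' ∈ P(X) and every u ∈ U, the predictive observation distributions satisfy ‖P(·|z,u) − P(·|z',u)‖_TV ≤ (1 − δ(Q))(1 + α_X) ρ_BL(z, z'), where ρ_BL is the bounded-Lipschitz metric on P(X) induced by the Euclidean metric on X. -/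
open MeasureTheory

noncomputable section

/-- `‖f‖_BL ≤ c` with respect to the distance-like function `d`:
there are `a, b ≥ 0` with `a + b ≤ c` such that `f` is bounded by `a` and
`b`-Lipschitz with respect to `d`. -/
def blNormLE {S : Type*} (d : S → S → ℝ) (f : S → ℝ) (c : ℝ) : Prop :=
  ∃ a b : ℝ, 0 ≤ a ∧ 0 ≤ b ∧ a + b ≤ c ∧ (∀ x, |f x| ≤ a) ∧
    ∀ x y, |f x - f y| ≤ b * d x y

/-- Bounded-Lipschitz distance between two measures, induced by `d`. -/
def blDist {S : Type*} [MeasurableSpace S] (d : S → S → ℝ) (μ ν : Measure S) : ℝ :=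
  sSup {r | ∃ f : S → ℝ, Measurable f ∧ blNormLE d f 1 ∧
    r = |∫ x, f x ∂μ - ∫ x, f x ∂ν|}

/-- Total variation distance between two measures. -/
def tvDist {S : Type*} [MeasurableSpace S] (μ ν : Measure S) : ℝ :=
  sSup {r | ∃ f : S → ℝ, Measurable f ∧ (∀ x, |f x| ≤ 1) ∧
    r = |∫ x, f x ∂μ - ∫ x, f x ∂ν|}

variable {X Y U : Type*} [MeasurableSpace X] [Fintype Y]

/-- One-step push-forward `zT_u` of a belief `z` through the transition kernel `T`. -/
def beliefPush (T : X → U → Measure X) (z : Measure X) (u : U) : Measure X :=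
  z.bind fun x => T x u

/-- Predictive probability `P(y|z,u) = ∫ Q(y|x₁) (zT_u)(dx₁)` of observing `y`. -/
def obsProb (T : X → U → Measure X) (Q : X → Y → ℝ) (z : Measure X) (u : U) (y : Y) : ℝ :=
  ∫ x, Q x y ∂(beliefPush T z u)

/-- Bayes update `F(z,u,y)` of the belief `z` after applying `u` and observing `y`. -/
def bayes (T : X → U → Measure X) (Q : X → Y → ℝ) (z : Measure X) (u : U) (y : Y) :
    Measure X :=
  (ENNReal.ofReal (obsProb T Q z u y))⁻¹ •
    ((beliefPush T z u).withDensity fun x => ENNReal.ofReal (Q x y))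

/-- Integral of a function `f` on beliefs against the belief transition kernel
`η(·|z,u) = Σ_{y : P(y|z,u) > 0} P(y|z,u) δ_{F(z,u,y)}`. -/
def etaInt (T : X → U → Measure X) (Q : X → Y → ℝ) (f : Measure X → ℝ)
    (z : Measure X) (u : U) : ℝ :=
  ∑ y : Y, if 0 < obsProb T Q z u y then obsProb T Q z u y * f (bayes T Q z u y) else 0

/-- Bounded-Lipschitz distance (with respect to a pseudometric `ρ` on beliefs)
between `η(·|z,u)` and `η(·|z',u)`. -/
def etaBLDist (T : X → U → Measure X) (Q : X → Y → ℝ)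
    (ρ : Measure X → Measure X → ℝ) (z z' : Measure X) (u : U) : ℝ :=
  sSup {r | ∃ f : Measure X → ℝ, blNormLE ρ f 1 ∧
    r = |etaInt T Q f z u - etaInt T Q f z' u|}

/-- The pseudometric `ρ(μ,ν) = Σ_{m ≥ 1} 2^{-(m+1)} |∫ f_m dμ - ∫ f_m dν|` on beliefs
induced by the sequence of test functions `fs` (with `fs k` playing the role of `f_{k+1}`). -/
def rhoSeq (fs : ℕ → X → ℝ) (μ ν : Measure X) : ℝ :=
  ∑' k : ℕ, (2 : ℝ)⁻¹ ^ (k + 2) * |∫ x, fs k x ∂μ - ∫ x, fs k x ∂ν|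

/-- Dobrushin coefficient of an observation channel `Q` into a finite set. -/
def dobrushinObs (Q : X → Y → ℝ) : ℝ :=
  ⨅ p : X × X, ∑ y : Y, min (Q p.1 y) (Q p.2 y)

/-- Dobrushin coefficient of a Markov kernel `K`, via finite measurable partitions. -/
def dobrushinKernel (K : X → Measure X) : ℝ :=
  sInf {r | ∃ (x x' : X) (n : ℕ) (A : Fin n → Set X),
    (∀ i, MeasurableSet (A i)) ∧ Pairwise (Function.onFun Disjoint A) ∧
    (⋃ i, A i) = Set.univ ∧
    r = ∑ i, min ((K x (A i)).toReal) ((K x' (A i)).toReal)}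

/-- `δ̃(T) = inf_u δ(T(·|·,u))`. -/
def dobrushinTrans (T : X → U → Measure X) : ℝ :=
  ⨅ u : U, dobrushinKernel fun x => T x u

end

/-- Total variation distance between the predictive observation distributions
`P(·|z,u)` and `P(·|z',u)` on the finite observation set `Y`. -/
noncomputable def obsTVDist {X Y U : Type*} [MeasurableSpace X] [Fintype Y]
    (T : X → U → MeasureTheory.Measure X) (Q : X → Y → ℝ)
    (z z' : MeasureTheory.Measure X) (u : U) : ℝ :=
  sSup {r | ∃ f : Y → ℝ, (∀ y, |f y| ≤ 1) ∧
    r = |∑ y : Y, f y * obsProb T Q z u y - ∑ y : Y, f y * obsProb T Q z' u y|}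

section Helpers

open MeasureTheory

variable {S : Type*} [MeasurableSpace S]

lemma my_integrable_of_bdd {μ : Measure S} [IsFiniteMeasure μ] {f : S → ℝ}
    (hf : Measurable f) {C : ℝ} (hb : ∀ x, |f x| ≤ C) : Integrable f μ :=
  (integrable_const C).mono' hf.aestronglyMeasurable
    (Filter.Eventually.of_forall fun x => by simpa [Real.norm_eq_abs] using hb x)

lemma my_key_repr {μ : Measure S} [IsProbabilityMeasure μ] {f : S → ℝ}
    (hf : Measurable f) {C : ℝ} (hfb : ∀ x, |f x| ≤ C) :
    ∫ y, f y ∂μ = (∫⁻ y, ENNReal.ofReal (f y + C) ∂μ).toReal - C := by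
  have hint : Integrable f μ := my_integrable_of_bdd hf hfb
  have h1 : ∫ y, (f y + C) ∂μ = (∫ y, f y ∂μ) + C := by
    rw [integral_add hint (integrable_const C), integral_const]
    simp
  have h2 : ∫ y, (f y + C) ∂μ = (∫⁻ y, ENNReal.ofReal (f y + C) ∂μ).toReal := by
    refine integral_eq_lintegral_of_nonneg_ae (Filter.Eventually.of_forall fun x => ?_)
      (hf.add measurable_const).aestronglyMeasurable
    have := (abs_le.mp (hfb x)).1
    show (0 : ℝ) ≤ f x + C
    linarith
  linarith

lemma my_lint_bound {μ : Measure S} [IsProbabilityMeasure μ] {f : S → ℝ}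
    {C : ℝ} (hfb : ∀ x, |f x| ≤ C) :
    ∫⁻ y, ENNReal.ofReal (f y + C) ∂μ ≤ ENNReal.ofReal (2 * C) := by
  calc ∫⁻ y, ENNReal.ofReal (f y + C) ∂μ
      ≤ ∫⁻ _, ENNReal.ofReal (2 * C) ∂μ := by
        refine lintegral_mono fun y => ENNReal.ofReal_le_ofReal ?_
        have := (abs_le.mp (hfb y)).2; linarith
    _ = ENNReal.ofReal (2 * C) := by simp

lemma my_meas_param {κ : S → Measure S} (hκ : Measurable κ)
    (hκp : ∀ x, IsProbabilityMeasure (κ x)) {f : S → ℝ} (hf : Measurable f)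
    {C : ℝ} (hfb : ∀ x, |f x| ≤ C) :
    Measurable fun x => ∫ y, f y ∂(κ x) := by
  have heq : (fun x => ∫ y, f y ∂(κ x)) =
      fun x => (∫⁻ y, ENNReal.ofReal (f y + C) ∂(κ x)).toReal - C := by
    funext x
    haveI := hκp x
    exact my_key_repr hf hfb
  rw [heq]
  exact (ENNReal.measurable_toReal.comp
    ((Measure.measurable_lintegral ((hf.add measurable_const).ennreal_ofReal)).comp hκ)).sub
    measurable_const

lemma my_bind_isProb {z : Measure S} [IsProbabilityMeasure z] {κ : S → Measure S}
    (hκ : Measurable κ) (hκp : ∀ x, IsProbabilityMeasure (κ x)) :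
    IsProbabilityMeasure (z.bind κ) := by
  constructor
  rw [Measure.bind_apply MeasurableSet.univ hκ.aemeasurable,
    lintegral_congr fun x => (hκp x).measure_univ]
  simp

lemma my_integral_bind {z : Measure S} [IsProbabilityMeasure z] {κ : S → Measure S}
    (hκ : Measurable κ) (hκp : ∀ x, IsProbabilityMeasure (κ x)) {f : S → ℝ}
    (hf : Measurable f) {C : ℝ} (hC : 0 ≤ C) (hfb : ∀ x, |f x| ≤ C) :
    ∫ y, f y ∂(z.bind κ) = ∫ x, ∫ y, f y ∂(κ x) ∂z := by
  haveI := my_bind_isProb (z := z) hκ hκp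
  set L : S → ENNReal := fun x => ∫⁻ y, ENNReal.ofReal (f y + C) ∂(κ x) with hL
  have hLmeas : Measurable L :=
    (Measure.measurable_lintegral ((hf.add measurable_const).ennreal_ofReal)).comp hκ
  have hLbnd : ∀ x, L x ≤ ENNReal.ofReal (2 * C) := fun x => by
    haveI := hκp x; exact my_lint_bound hfb
  have hLlt : ∀ x, L x < ⊤ := fun x => lt_of_le_of_lt (hLbnd x) ENNReal.ofReal_lt_top
  have hinner : ∀ x, ∫ y, f y ∂(κ x) = (L x).toReal - C := fun x => by
    haveI := hκp x; exact my_key_repr hf hfb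
  have hLRint : Integrable (fun x => (L x).toReal) z := by
    refine my_integrable_of_bdd (ENNReal.measurable_toReal.comp hLmeas) (C := 2 * C) fun x => ?_
    rw [abs_of_nonneg ENNReal.toReal_nonneg]
    calc (L x).toReal ≤ (ENNReal.ofReal (2 * C)).toReal :=
          ENNReal.toReal_mono ENNReal.ofReal_ne_top (hLbnd x)
      _ = 2 * C := ENNReal.toReal_ofReal (by linarith)
  calc ∫ y, f y ∂(z.bind κ)
      = (∫⁻ y, ENNReal.ofReal (f y + C) ∂(z.bind κ)).toReal - C := my_key_repr hf hfb
    _ = (∫⁻ x, L x ∂z).toReal - C := by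
        rw [Measure.lintegral_bind (f := fun y => ENNReal.ofReal (f y + C)) hκ.aemeasurable
          ((hf.add measurable_const).ennreal_ofReal).aemeasurable]
    _ = (∫ x, (L x).toReal ∂z) - C := by
        rw [integral_toReal hLmeas.aemeasurable (Filter.Eventually.of_forall hLlt)]
    _ = ∫ x, ((L x).toReal - C) ∂z := by
        rw [integral_sub hLRint (integrable_const C), integral_const]; simp
    _ = ∫ x, ∫ y, f y ∂(κ x) ∂z := by
        exact (integral_congr_ae (Filter.Eventually.of_forall fun x => (hinner x).symm))

lemma my_abs_sub_min (a b : ℝ) : |a - b| = a + b - 2 * min a b := by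
  rcases le_total a b with h | h
  · rw [abs_of_nonpos (by linarith), min_eq_left h]; ring
  · rw [abs_of_nonneg (by linarith), min_eq_right h]; ring

lemma my_prob_eq_of_subsingleton [Subsingleton S] (μ ν : Measure S)
    [IsProbabilityMeasure μ] [IsProbabilityMeasure ν] : μ = ν := by
  ext s _
  rcases s.eq_empty_or_nonempty with h | ⟨a, ha⟩
  · simp [h]
  · have hs : s = Set.univ := Set.eq_univ_of_forall fun b => (Subsingleton.elim a b) ▸ ha
    rw [hs, measure_univ, measure_univ]

lemma my_abs_sub_le (a b : ℝ) : |a - b| ≤ |a| + |b| := by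
  calc |a - b| = |a + -b| := by rw [sub_eq_add_neg]
    _ ≤ |a| + |-b| := abs_add_le _ _
    _ = |a| + |b| := by rw [abs_neg]

lemma my_int_abs_le_one {μ : Measure S} [IsProbabilityMeasure μ] {f : S → ℝ} {C : ℝ}
    (hfb : ∀ x, |f x| ≤ C) : |∫ x, f x ∂μ| ≤ C := by
  have := norm_integral_le_of_norm_le_const (μ := μ) (f := f) (C := C)
    (Filter.Eventually.of_forall fun x => by simpa [Real.norm_eq_abs] using hfb x)
  simpa [Real.norm_eq_abs, measure_univ] using this

lemma my_tv_bdd {μ ν : Measure S} [IsProbabilityMeasure μ] [IsProbabilityMeasure ν] :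
    BddAbove {r | ∃ f : S → ℝ, Measurable f ∧ (∀ x, |f x| ≤ 1) ∧
      r = |∫ x, f x ∂μ - ∫ x, f x ∂ν|} := by
  refine ⟨2, ?_⟩
  rintro r ⟨f, _, hfb, rfl⟩
  have h1 : |∫ x, f x ∂μ| ≤ 1 := my_int_abs_le_one hfb
  have h2 : |∫ x, f x ∂ν| ≤ 1 := my_int_abs_le_one hfb
  have := my_abs_sub_le (∫ x, f x ∂μ) (∫ x, f x ∂ν)
  linarith

lemma my_le_tvDist {μ ν : Measure S} [IsProbabilityMeasure μ] [IsProbabilityMeasure ν]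
    {f : S → ℝ} (hfm : Measurable f) (hfb : ∀ x, |f x| ≤ 1) :
    |∫ x, f x ∂μ - ∫ x, f x ∂ν| ≤ tvDist μ ν :=
  le_csSup my_tv_bdd ⟨f, hfm, hfb, rfl⟩

lemma my_tvDist_nonneg {μ ν : Measure S} [IsProbabilityMeasure μ] [IsProbabilityMeasure ν] :
    0 ≤ tvDist μ ν := by
  have h := my_le_tvDist (μ := μ) (ν := ν) (f := fun _ => 0) measurable_const
    (fun x => by norm_num)
  simpa using h

lemma my_bl_bdd {d : S → S → ℝ} {μ ν : Measure S} [IsProbabilityMeasure μ]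
    [IsProbabilityMeasure ν] :
    BddAbove {r | ∃ f : S → ℝ, Measurable f ∧ blNormLE d f 1 ∧
      r = |∫ x, f x ∂μ - ∫ x, f x ∂ν|} := by
  refine ⟨2, ?_⟩
  rintro r ⟨f, _, ⟨a, b, ha, hb, hab, hfa, _⟩, rfl⟩
  have hfb : ∀ x, |f x| ≤ 1 := fun x => (hfa x).trans (by linarith)
  have h1 : |∫ x, f x ∂μ| ≤ 1 := my_int_abs_le_one hfb
  have h2 : |∫ x, f x ∂ν| ≤ 1 := my_int_abs_le_one hfb
  have := my_abs_sub_le (∫ x, f x ∂μ) (∫ x, f x ∂ν)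
  linarith

lemma my_le_blDist {d : S → S → ℝ} {μ ν : Measure S} [IsProbabilityMeasure μ]
    [IsProbabilityMeasure ν] {f : S → ℝ} (hfm : Measurable f) (hbl : blNormLE d f 1) :
    |∫ x, f x ∂μ - ∫ x, f x ∂ν| ≤ blDist d μ ν :=
  le_csSup my_bl_bdd ⟨f, hfm, hbl, rfl⟩

lemma my_blDist_nonneg {d : S → S → ℝ} {μ ν : Measure S} [IsProbabilityMeasure μ]
    [IsProbabilityMeasure ν] : 0 ≤ blDist d μ ν := by
  have h := my_le_blDist (d := d) (μ := μ) (ν := ν) (f := fun _ => 0) measurable_const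
    ⟨0, 0, le_rfl, le_rfl, by norm_num, fun x => by simp, fun x y => by simp⟩
  simpa using h

end Helpers

theorem statement5 {m : ℕ} (Xs : Set (EuclideanSpace ℝ (Fin m))) (hXs : MeasurableSet Xs)
    {Y U : Type*} [Fintype Y] [Fintype U]
    (T : Xs → U → MeasureTheory.Measure Xs)
    (hT_meas : ∀ u : U, Measurable fun x : Xs => T x u)
    (hT_prob : ∀ (x : Xs) (u : U), MeasureTheory.IsProbabilityMeasure (T x u))
    (Q : Xs → Y → ℝ)
    (hQ_meas : ∀ y : Y, Measurable fun x : Xs => Q x y)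
    (hQ_nonneg : ∀ (x : Xs) (y : Y), 0 ≤ Q x y)
    (hQ_sum : ∀ x : Xs, ∑ y : Y, Q x y = 1)
    (αX : ℝ)
    (hT_lip : ∀ (x x' : Xs) (u : U), tvDist (T x u) (T x' u) ≤ αX * dist x x')
    (z z' : MeasureTheory.Measure Xs)
    (hz : MeasureTheory.IsProbabilityMeasure z)
    (hz' : MeasureTheory.IsProbabilityMeasure z')
    (u : U) :
    obsTVDist T Q z z' u ≤
      (1 - dobrushinObs Q) * (1 + αX) * blDist (fun x x' : Xs => dist x x') z z' := by
  classical
  open MeasureTheory in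
  haveI hXne : Nonempty Xs := by
    by_contra h
    rw [not_nonempty_iff] at h
    have h1 := hz.measure_univ
    rw [Set.univ_eq_empty_iff.mpr h] at h1
    simp at h1
  set δ : ℝ := dobrushinObs Q with hδdef
  have hbddmin : BddBelow (Set.range fun p : Xs × Xs => ∑ y : Y, min (Q p.1 y) (Q p.2 y)) := by
    refine ⟨0, ?_⟩
    rintro r ⟨p, rfl⟩
    exact Finset.sum_nonneg fun y _ => le_min (hQ_nonneg _ _) (hQ_nonneg _ _)
  have hδ0 : 0 ≤ δ := by
    rw [hδdef]
    show (0 : ℝ) ≤ ⨅ p : Xs × Xs, ∑ y : Y, min (Q p.1 y) (Q p.2 y)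
    exact le_ciInf fun p => Finset.sum_nonneg fun y _ => le_min (hQ_nonneg _ _) (hQ_nonneg _ _)
  have hδle : ∀ x x' : Xs, δ ≤ ∑ y : Y, min (Q x y) (Q x' y) := by
    intro x x'
    rw [hδdef]
    show (⨅ p : Xs × Xs, ∑ y : Y, min (Q p.1 y) (Q p.2 y)) ≤ _
    exact ciInf_le hbddmin (x, x')
  have hδ1 : δ ≤ 1 := by
    obtain ⟨x0⟩ := hXne
    have h := hδle x0 x0
    simpa [min_self, hQ_sum x0] using h
  have h1δ : 0 ≤ 1 - δ := by linarith
  by_cases hnt : ∃ a b : Xs, a ≠ b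
  swap
  · -- subsingleton case
    haveI hsub : Subsingleton Xs := ⟨fun a b => by
      by_contra hne; exact hnt ⟨a, b, hne⟩⟩
    have hzz : z = z' := my_prob_eq_of_subsingleton z z'
    have hbl : blDist (fun x x' : Xs => dist x x') z z' = 0 := by
      refine le_antisymm ?_ my_blDist_nonneg
      refine Real.sSup_le ?_ le_rfl
      rintro r ⟨f0, -, -, rfl⟩
      rw [hzz]
      simp
    rw [hbl, mul_zero]
    refine Real.sSup_le ?_ le_rfl
    rintro r ⟨f, hf1, rfl⟩
    rw [hzz, sub_self, abs_zero]
  · obtain ⟨xa, xb, hab⟩ := hnt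
    haveI := hT_prob xa u
    haveI := hT_prob xb u
    have hα : 0 ≤ αX := by
      have h1 := hT_lip xa xb u
      have h2 : (0 : ℝ) ≤ tvDist (T xa u) (T xb u) := my_tvDist_nonneg
      have hd : 0 < dist xa xb := dist_pos.mpr hab
      nlinarith
    have h1α : (0 : ℝ) < 1 + αX := by linarith
    have hRHS0 : 0 ≤ (1 - δ) * (1 + αX) * blDist (fun x x' : Xs => dist x x') z z' :=
      mul_nonneg (mul_nonneg h1δ (le_of_lt h1α)) my_blDist_nonneg
    refine Real.sSup_le ?_ hRHS0
    rintro r ⟨f, hf1, rfl⟩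
    set g : Xs → ℝ := fun x => ∑ y : Y, f y * Q x y with hgdef
    have hg_meas : Measurable g :=
      Finset.measurable_sum _ fun y _ => (hQ_meas y).const_mul (f y)
    have hQb : ∀ (x : Xs) (y : Y), Q x y ≤ 1 := fun x y => by
      calc Q x y ≤ ∑ y' : Y, Q x y' :=
            Finset.single_le_sum (fun y' _ => hQ_nonneg x y') (Finset.mem_univ y)
        _ = 1 := hQ_sum x
    have hg_bnd : ∀ x, |g x| ≤ 1 := fun x => by
      calc |g x| ≤ ∑ y : Y, |f y * Q x y| := Finset.abs_sum_le_sum_abs _ _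
        _ ≤ ∑ y : Y, Q x y := Finset.sum_le_sum fun y _ => by
            rw [abs_mul, abs_of_nonneg (hQ_nonneg x y)]
            nlinarith [hf1 y, hQ_nonneg x y, abs_nonneg (f y)]
        _ = 1 := hQ_sum x
    have hosc : ∀ x x' : Xs, g x - g x' ≤ 2 * (1 - δ) := by
      intro x x'
      have e1 : g x - g x' = ∑ y : Y, (f y * Q x y - f y * Q x' y) :=
        (Finset.sum_sub_distrib _ _).symm
      have e2 : ∑ y : Y, (f y * Q x y - f y * Q x' y) ≤ ∑ y : Y, |Q x y - Q x' y| := by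
        refine Finset.sum_le_sum fun y _ => ?_
        have hre : f y * Q x y - f y * Q x' y = f y * (Q x y - Q x' y) := by ring
        rw [hre]
        calc f y * (Q x y - Q x' y) ≤ |f y * (Q x y - Q x' y)| := le_abs_self _
          _ = |f y| * |Q x y - Q x' y| := abs_mul _ _
          _ ≤ 1 * |Q x y - Q x' y| := mul_le_mul_of_nonneg_right (hf1 y) (abs_nonneg _)
          _ = |Q x y - Q x' y| := one_mul _
      have e3 : ∑ y : Y, |Q x y - Q x' y| = 2 - 2 * ∑ y : Y, min (Q x y) (Q x' y) := by
        rw [Finset.sum_congr rfl fun y _ => my_abs_sub_min (Q x y) (Q x' y),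
          Finset.sum_sub_distrib, Finset.sum_add_distrib, hQ_sum, hQ_sum, ← Finset.mul_sum]
        norm_num
      have e4 := hδle x x'
      rw [e3] at e2
      rw [e1]
      linarith
    have hbddA : BddAbove (Set.range g) :=
      ⟨1, by rintro r ⟨x, rfl⟩; exact (abs_le.mp (hg_bnd x)).2⟩
    have hbddB : BddBelow (Set.range g) :=
      ⟨-1, by rintro r ⟨x, rfl⟩; exact (abs_le.mp (hg_bnd x)).1⟩
    set M : ℝ := ⨆ x, g x with hM
    set m0 : ℝ := ⨅ x, g x with hm0
    have hgM : ∀ x, g x ≤ M := fun x => le_ciSup hbddA x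
    have hmg : ∀ x, m0 ≤ g x := fun x => ciInf_le hbddB x
    have hMm : M - m0 ≤ 2 * (1 - δ) := by
      have h : M ≤ m0 + 2 * (1 - δ) := by
        refine ciSup_le fun x => ?_
        have h2 : g x - 2 * (1 - δ) ≤ m0 := le_ciInf fun x' => by linarith [hosc x x']
        linarith
      linarith
    set c : ℝ := (M + m0) / 2 with hc
    set gb : Xs → ℝ := fun x => g x - c with hgb
    have hgb_meas : Measurable gb := hg_meas.sub measurable_const
    have hgb_bnd : ∀ x, |gb x| ≤ 1 - δ := fun x => abs_le.mpr
      ⟨by show -(1 - δ) ≤ g x - c; rw [hc]; have := hmg x; have := hgM x; linarith,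
       by show g x - c ≤ 1 - δ; rw [hc]; have := hmg x; have := hgM x; linarith⟩
    set hfun : Xs → ℝ := fun x => ∫ y, gb y ∂(T x u) with hhfun
    have hh_meas : Measurable hfun :=
      my_meas_param (hT_meas u) (fun x => hT_prob x u) hgb_meas hgb_bnd
    have hh_bnd : ∀ x, |hfun x| ≤ 1 - δ := fun x => by
      haveI := hT_prob x u
      exact my_int_abs_le_one hgb_bnd
    have hh_lip : ∀ x x' : Xs, |hfun x - hfun x'| ≤ (1 - δ) * (αX * dist x x') := by
      intro x x'
      haveI := hT_prob x u
      haveI := hT_prob x' u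
      rcases eq_or_lt_of_le h1δ with heq | hpos
      · -- 1 - δ = 0
        have hgb0 : ∀ y, gb y = 0 := fun y =>
          abs_nonpos_iff.mp ((hgb_bnd y).trans (le_of_eq heq.symm))
        have hx0 : hfun x = 0 := by
          show ∫ y, gb y ∂(T x u) = 0
          rw [show gb = fun _ => (0 : ℝ) from funext hgb0]
          simp
        have hx'0 : hfun x' = 0 := by
          show ∫ y, gb y ∂(T x' u) = 0
          rw [show gb = fun _ => (0 : ℝ) from funext hgb0]
          simp
        rw [hx0, hx'0, sub_zero, abs_zero, ← heq, zero_mul]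
      · set F : Xs → ℝ := fun y => gb y * (1 - δ)⁻¹ with hF
        have hFm : Measurable F := hgb_meas.mul_const _
        have hFb : ∀ y, |F y| ≤ 1 := fun y => by
          show |gb y * (1 - δ)⁻¹| ≤ 1
          rw [abs_mul, abs_of_pos (inv_pos.mpr hpos)]
          calc |gb y| * (1 - δ)⁻¹ ≤ (1 - δ) * (1 - δ)⁻¹ :=
                mul_le_mul_of_nonneg_right (hgb_bnd y) (le_of_lt (inv_pos.mpr hpos))
            _ = 1 := mul_inv_cancel₀ (ne_of_gt hpos)
        have htv : |∫ y, F y ∂(T x u) - ∫ y, F y ∂(T x' u)| ≤ αX * dist x x' :=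
          (my_le_tvDist hFm hFb).trans (hT_lip x x' u)
        have hexp : ∀ w : Xs, hfun w = (1 - δ) * ∫ y, F y ∂(T w u) := by
          intro w
          show (∫ y, gb y ∂(T w u)) = (1 - δ) * ∫ y, gb y * (1 - δ)⁻¹ ∂(T w u)
          rw [integral_mul_const]
          field_simp
        rw [hexp x, hexp x', ← mul_sub, abs_mul, abs_of_pos hpos]
        exact mul_le_mul_of_nonneg_left htv (le_of_lt hpos)
    have hkey : ∀ (w : MeasureTheory.Measure Xs), MeasureTheory.IsProbabilityMeasure w →
        ∑ y : Y, f y * obsProb T Q w u y = (∫ x, hfun x ∂w) + c := by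
      intro w hw
      haveI := hw
      haveI hbw : MeasureTheory.IsProbabilityMeasure (w.bind fun x => T x u) :=
        my_bind_isProb (z := w) (hT_meas u) (fun x => hT_prob x u)
      have e1 : ∑ y : Y, f y * obsProb T Q w u y
          = ∫ x, g x ∂(w.bind fun x => T x u) := by
        have hterm : ∀ y : Y, f y * obsProb T Q w u y
            = ∫ x, f y * Q x y ∂(w.bind fun x => T x u) := by
          intro y
          rw [integral_const_mul]
          rfl
        rw [Finset.sum_congr rfl fun y _ => hterm y, ← integral_finset_sum]
        intro y _
        refine my_integrable_of_bdd ((hQ_meas y).const_mul (f y)) (C := 1) fun x => ?_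
        rw [abs_mul, abs_of_nonneg (hQ_nonneg x y)]
        nlinarith [hf1 y, hQb x y, hQ_nonneg x y, abs_nonneg (f y)]
      have e2 : ∫ x, g x ∂(w.bind fun x => T x u)
          = (∫ x, gb x ∂(w.bind fun x => T x u)) + c := by
        have hgc : ∀ x, g x = gb x + c := fun x => by
          show g x = (g x - c) + c; ring
        rw [integral_congr_ae (Filter.Eventually.of_forall hgc),
          integral_add (my_integrable_of_bdd hgb_meas hgb_bnd) (integrable_const c),
          integral_const]
        simp
      have e3 : ∫ x, gb x ∂(w.bind fun x => T x u) = ∫ x, hfun x ∂w :=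
        my_integral_bind (hT_meas u) (fun x => hT_prob x u) hgb_meas h1δ hgb_bnd
      rw [e1, e2, e3]
    rw [hkey z hz, hkey z' hz',
      show (∫ x, hfun x ∂z + c) - (∫ x, hfun x ∂z' + c)
        = ∫ x, hfun x ∂z - ∫ x, hfun x ∂z' from by ring]
    set C0 : ℝ := (1 - δ) * (1 + αX) with hC0
    by_cases hC0z : C0 = 0
    · have h1δ0 : 1 - δ = 0 := by
        rcases mul_eq_zero.mp (hC0 ▸ hC0z) with h | h
        · exact h
        · linarith
      have hh0 : ∀ x, hfun x = 0 := fun x =>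
        abs_nonpos_iff.mp (h1δ0 ▸ hh_bnd x)
      rw [show hfun = fun _ => (0 : ℝ) from funext hh0]
      simp [hC0z]
    · have hC0pos : 0 < C0 :=
        lt_of_le_of_ne (hC0 ▸ mul_nonneg h1δ (le_of_lt h1α)) (Ne.symm hC0z)
      set F : Xs → ℝ := fun x => hfun x * C0⁻¹ with hFd
      have hFm : Measurable F := hh_meas.mul_const _
      have hbl : blNormLE (fun x x' : Xs => dist x x') F 1 := by
        refine ⟨(1 - δ) * C0⁻¹, (1 - δ) * αX * C0⁻¹, ?_, ?_, ?_, ?_, ?_⟩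
        · exact mul_nonneg h1δ (inv_nonneg.mpr (le_of_lt hC0pos))
        · exact mul_nonneg (mul_nonneg h1δ hα) (inv_nonneg.mpr (le_of_lt hC0pos))
        · have he : (1 - δ) * C0⁻¹ + (1 - δ) * αX * C0⁻¹ = C0 * C0⁻¹ := by
            rw [hC0]; ring
          rw [he, mul_inv_cancel₀ (ne_of_gt hC0pos)]
        · intro x
          show |hfun x * C0⁻¹| ≤ _
          rw [abs_mul, abs_of_pos (inv_pos.mpr hC0pos)]
          exact mul_le_mul_of_nonneg_right (hh_bnd x) (le_of_lt (inv_pos.mpr hC0pos))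
        · intro x y
          show |hfun x * C0⁻¹ - hfun y * C0⁻¹| ≤ (1 - δ) * αX * C0⁻¹ * dist x y
          rw [show hfun x * C0⁻¹ - hfun y * C0⁻¹ = (hfun x - hfun y) * C0⁻¹ from by ring,
            abs_mul, abs_of_pos (inv_pos.mpr hC0pos)]
          calc |hfun x - hfun y| * C0⁻¹
              ≤ ((1 - δ) * (αX * dist x y)) * C0⁻¹ :=
                mul_le_mul_of_nonneg_right (hh_lip x y) (le_of_lt (inv_pos.mpr hC0pos))
            _ = (1 - δ) * αX * C0⁻¹ * dist x y := by ring
      have hle := my_le_blDist (d := fun x x' : Xs => dist x x') (μ := z) (ν := z') hFm hbl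
      have hFz : ∫ x, F x ∂z = (∫ x, hfun x ∂z) * C0⁻¹ := integral_mul_const _ _
      have hFz' : ∫ x, F x ∂z' = (∫ x, hfun x ∂z') * C0⁻¹ := integral_mul_const _ _
      have hre : |∫ x, hfun x ∂z - ∫ x, hfun x ∂z'|
          = C0 * |∫ x, F x ∂z - ∫ x, F x ∂z'| := by
        rw [hFz, hFz',
          show (∫ x, hfun x ∂z) * C0⁻¹ - (∫ x, hfun x ∂z') * C0⁻¹
            = (∫ x, hfun x ∂z - ∫ x, hfun x ∂z') * C0⁻¹ from by ring,
          abs_mul, abs_of_pos (inv_pos.mpr hC0pos)]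
        field_simp
      rw [hre]
      exact mul_le_mul_of_nonneg_left hle (le_of_lt hC0pos)
end

section
/- Let (Z,d) be a metric space, U a finite nonempty set, β ∈ (0,1), c : Z×U → ℝ bounded measurable with |c(z,u) − c(z',u)| ≤ α_c d(z,z') for all z, z' ∈ Z and u ∈ U, and let η be a Markov kernel from Z×U to Z satisfying the bounded-Lipschitz contraction condition with constant α_Z. Define the value iteration v_0 ≡ 0 and v_{k+1}(z) = min_{u∈U} ( c(z,u) + β ∫ v_k(z₁) η(dz₁|z,u) ). Then for every k ≥ 1, ‖v_k‖_BL ≤ α_c Σ_{t=0}^{k−1} (βα_Z)^t + ‖c‖_∞ Σ_{t=0}^{k−1} (βα_Z)^t (1 − β^{k−t})/(1 − β). In particular, if βα_Z < 1 then ‖v_k‖_BL ≤ (1/(1 − βα_Z)) ( ‖c‖_∞/(1 − β) + α_c ) for all k. -/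
open MeasureTheory

noncomputable section

/-- Sup norm `‖c‖_∞` of a two-variable (stage cost) function. -/
def supNorm {Z U : Type*} (c : Z → U → ℝ) : ℝ :=
  ⨆ p : Z × U, |c p.1 p.2|

/-- The bounded-Lipschitz contraction condition for the kernel `η` with constant `αZ`:
`|∫ f dη(·|z,u) − ∫ f dη(·|z',u)| ≤ αZ ‖f‖_BL d(z,z')` for every bounded Lipschitz `f`. -/
def blContract {Z U : Type*} [MeasurableSpace Z] [MetricSpace Z]
    (η : Z → U → Measure Z) (αZ : ℝ) : Prop :=
  ∀ (f : Z → ℝ) (C : ℝ), blNormLE dist f C → ∀ (u : U) (z z' : Z),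
    |∫ x, f x ∂(η z u) - ∫ x, f x ∂(η z' u)| ≤ αZ * C * dist z z'

end

/-- Recursive sup-norm bound for the value iterates. -/
noncomputable def auxA (S β : ℝ) : ℕ → ℝ
  | 0 => 0
  | k + 1 => S + β * auxA S β k

/-- Recursive Lipschitz bound for the value iterates. -/
noncomputable def auxL (S β αc αZ : ℝ) : ℕ → ℝ
  | 0 => 0
  | k + 1 => αc + β * αZ * (auxA S β k + auxL S β αc αZ k)

lemma auxAL_eq (S β αc αZ : ℝ) (hβ : β ≠ 1) (k : ℕ) :
    auxA S β k = S * (1 - β ^ k) / (1 - β) ∧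
    auxA S β k + auxL S β αc αZ k =
      αc * ∑ t ∈ Finset.range k, (β * αZ) ^ t +
      S * ∑ t ∈ Finset.range k, (β * αZ) ^ t * (1 - β ^ (k - t)) / (1 - β) := by
  have hb : 1 - β ≠ 0 := sub_ne_zero.mpr (Ne.symm hβ)
  induction k with
  | zero => simp [auxA, auxL]
  | succ k ih =>
    obtain ⟨ih1, ih2⟩ := ih
    have hA1 : auxA S β (k + 1) = S * (1 - β ^ (k + 1)) / (1 - β) := by
      show S + β * auxA S β k = _
      rw [ih1]
      field_simp
      ring
    refine ⟨hA1, ?_⟩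
    have hsum : ∑ t ∈ Finset.range (k + 1), (β * αZ) ^ t * (1 - β ^ (k + 1 - t)) / (1 - β)
        = (1 - β ^ (k + 1)) / (1 - β)
          + β * αZ * ∑ t ∈ Finset.range k, (β * αZ) ^ t * (1 - β ^ (k - t)) / (1 - β) := by
      rw [Finset.sum_range_succ']
      have hc : ∀ t ∈ Finset.range k,
          (β * αZ) ^ (t + 1) * (1 - β ^ (k + 1 - (t + 1))) / (1 - β)
            = β * αZ * ((β * αZ) ^ t * (1 - β ^ (k - t)) / (1 - β)) := by
        intro t _
        rw [Nat.succ_sub_succ]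
        ring
      rw [Finset.sum_congr rfl hc, ← Finset.mul_sum]
      simp
      ring
    have hgs : ∑ t ∈ Finset.range (k + 1), (β * αZ) ^ t
        = β * αZ * ∑ t ∈ Finset.range k, (β * αZ) ^ t + 1 := geom_sum_succ
    rw [hsum, hgs, hA1]
    have hL : auxL S β αc αZ k =
        (αc * ∑ t ∈ Finset.range k, (β * αZ) ^ t +
          S * ∑ t ∈ Finset.range k, (β * αZ) ^ t * (1 - β ^ (k - t)) / (1 - β))
          - auxA S β k := by linarith
    show S * (1 - β ^ (k + 1)) / (1 - β)
        + (αc + β * αZ * (auxA S β k + auxL S β αc αZ k)) = _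
    rw [hL, ih1]
    field_simp
    ring

lemma auxAL_nonneg (S β αc αZ : ℝ) (hS : 0 ≤ S) (hβ : 0 ≤ β) (hαc : 0 ≤ αc)
    (hαZ : 0 ≤ αZ) (k : ℕ) : 0 ≤ auxA S β k ∧ 0 ≤ auxL S β αc αZ k := by
  induction k with
  | zero => simp [auxA, auxL]
  | succ k ih =>
    obtain ⟨h1, h2⟩ := ih
    constructor
    · show 0 ≤ S + β * auxA S β k
      have := mul_nonneg hβ h1
      linarith
    · show 0 ≤ αc + β * αZ * (auxA S β k + auxL S β αc αZ k)
      have := mul_nonneg (mul_nonneg hβ hαZ) (add_nonneg h1 h2)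
      linarith

lemma auxAL_bdd (S β αc αZ : ℝ) (hS : 0 ≤ S) (hβ0 : 0 < β) (hβ1 : β < 1) (hαc : 0 ≤ αc)
    (hαZ : 0 ≤ αZ) (hβZ : β * αZ < 1) (k : ℕ) :
    auxA S β k ≤ S / (1 - β) ∧
    auxA S β k + auxL S β αc αZ k ≤ 1 / (1 - β * αZ) * (S / (1 - β) + αc) := by
  have h1 : (0:ℝ) < 1 - β := by linarith
  have h2 : (0:ℝ) < 1 - β * αZ := by linarith
  have hB0 : 0 ≤ 1 / (1 - β * αZ) * (S / (1 - β) + αc) := by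
    have := div_nonneg hS h1.le
    have h3 : (0:ℝ) ≤ 1 / (1 - β * αZ) := by positivity
    nlinarith
  have hAid : S + β * (S / (1 - β)) = S / (1 - β) := by
    field_simp
    ring
  have hBid : (1 - β * αZ) * (1 / (1 - β * αZ) * (S / (1 - β) + αc))
      = S / (1 - β) + αc := by
    field_simp
  induction k with
  | zero =>
    constructor
    · show (0:ℝ) ≤ S / (1 - β)
      exact div_nonneg hS h1.le
    · show (0:ℝ) + 0 ≤ _
      simpa using hB0
  | succ k ih =>
    obtain ⟨ihA, ihS⟩ := ih
    have hmul1 : β * auxA S β k ≤ β * (S / (1 - β)) :=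
      mul_le_mul_of_nonneg_left ihA hβ0.le
    have hmul2 : β * αZ * (auxA S β k + auxL S β αc αZ k)
        ≤ β * αZ * (1 / (1 - β * αZ) * (S / (1 - β) + αc)) :=
      mul_le_mul_of_nonneg_left ihS (by positivity)
    constructor
    · show S + β * auxA S β k ≤ S / (1 - β)
      linarith
    · show S + β * auxA S β k + (αc + β * αZ * (auxA S β k + auxL S β αc αZ k)) ≤ _
      nlinarith

theorem statement7 {Z U : Type*} [MetricSpace Z] [MeasurableSpace Z] [BorelSpace Z]
    [Fintype U] [Nonempty U]
    (β : ℝ) (hβ0 : 0 < β) (hβ1 : β < 1)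
    (c : Z → U → ℝ)
    (hc_meas : ∀ u : U, Measurable fun z : Z => c z u)
    (hc_bdd : ∃ M : ℝ, ∀ (z : Z) (u : U), |c z u| ≤ M)
    (αc : ℝ) (hαc : 0 ≤ αc)
    (hc_lip : ∀ (z z' : Z) (u : U), |c z u - c z' u| ≤ αc * dist z z')
    (η : Z → U → MeasureTheory.Measure Z)
    (hη_meas : ∀ u : U, Measurable fun z : Z => η z u)
    (hη_prob : ∀ (z : Z) (u : U), MeasureTheory.IsProbabilityMeasure (η z u))
    (αZ : ℝ) (hαZ : 0 ≤ αZ)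
    (hη_contract : blContract η αZ)
    (v : ℕ → Z → ℝ)
    (hv0 : ∀ z : Z, v 0 z = 0)
    (hv : ∀ (k : ℕ) (z : Z), v (k + 1) z = ⨅ u : U, (c z u + β * ∫ z₁, v k z₁ ∂(η z u))) :
    (∀ k : ℕ, 1 ≤ k →
      blNormLE dist (v k)
        (αc * ∑ t ∈ Finset.range k, (β * αZ) ^ t +
          supNorm c * ∑ t ∈ Finset.range k, (β * αZ) ^ t * (1 - β ^ (k - t)) / (1 - β))) ∧
    (β * αZ < 1 →
      ∀ k : ℕ, blNormLE dist (v k) (1 / (1 - β * αZ) * (supNorm c / (1 - β) + αc))) := by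
  obtain ⟨M, hM⟩ := hc_bdd
  set S := supNorm c with hSdef
  have hbdd : BddAbove (Set.range fun p : Z × U => |c p.1 p.2|) := by
    refine ⟨M, ?_⟩
    rintro x ⟨p, rfl⟩
    exact hM p.1 p.2
  have hS : ∀ (z : Z) (u : U), |c z u| ≤ S := fun z u => le_ciSup hbdd (z, u)
  have hS0 : 0 ≤ S := Real.iSup_nonneg fun p => abs_nonneg _
  -- integral bound helper
  have hint : ∀ (f : Z → ℝ) (Mf : ℝ), (∀ x, |f x| ≤ Mf) →
      ∀ (z : Z) (u : U), |∫ x, f x ∂(η z u)| ≤ Mf := by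
    intro f Mf hf z u
    haveI := hη_prob z u
    have h := MeasureTheory.norm_integral_le_of_norm_le_const (μ := η z u) (f := f)
      (C := Mf) (Filter.Eventually.of_forall fun x => by simpa using hf x)
    simpa [Real.norm_eq_abs, measure_univ] using h
  -- infimum lemmas
  have hinf_le : ∀ (g g' : U → ℝ) (Mg : ℝ), (∀ u, g u - g' u ≤ Mg) →
      (⨅ u, g u) ≤ (⨅ u, g' u) + Mg := by
    intro g g' Mg h
    rw [← sub_le_iff_le_add]
    apply le_ciInf
    intro u
    have h1 : (⨅ u, g u) ≤ g u := ciInf_le (Set.finite_range g).bddBelow u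
    linarith [h u]
  have habs_inf : ∀ (g : U → ℝ) (Mg : ℝ), (∀ u, |g u| ≤ Mg) → |⨅ u, g u| ≤ Mg := by
    intro g Mg h
    obtain ⟨u₀⟩ := (inferInstance : Nonempty U)
    rw [abs_le]
    constructor
    · exact le_ciInf fun u => (abs_le.mp (h u)).1
    · exact (ciInf_le (Set.finite_range g).bddBelow u₀).trans (abs_le.mp (h u₀)).2
  -- main induction
  have hmain : ∀ k : ℕ, (∀ z, |v k z| ≤ auxA S β k) ∧
      (∀ z z', |v k z - v k z'| ≤ auxL S β αc αZ k * dist z z') := by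
    intro k
    induction k with
    | zero => simp [auxA, auxL, hv0]
    | succ k ih =>
      obtain ⟨ihA, ihL⟩ := ih
      obtain ⟨hA0, hL0⟩ := auxAL_nonneg S β αc αZ hS0 hβ0.le hαc hαZ k
      have hintv : ∀ (z : Z) (u : U), |∫ x, v k x ∂(η z u)| ≤ auxA S β k :=
        hint _ _ ihA
      constructor
      · intro z
        rw [hv]
        apply habs_inf
        intro u
        show |c z u + β * ∫ z₁, v k z₁ ∂(η z u)| ≤ S + β * auxA S β k
        calc |c z u + β * ∫ z₁, v k z₁ ∂(η z u)|
            ≤ |c z u| + |β * ∫ z₁, v k z₁ ∂(η z u)| := abs_add_le _ _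
          _ = |c z u| + β * |∫ z₁, v k z₁ ∂(η z u)| := by
              rw [abs_mul, abs_of_nonneg hβ0.le]
          _ ≤ S + β * auxA S β k := by
              have := mul_le_mul_of_nonneg_left (hintv z u) hβ0.le
              linarith [hS z u]
      · intro z z'
        rw [hv, hv]
        have hterm : ∀ u : U,
            |(c z u + β * ∫ z₁, v k z₁ ∂(η z u)) -
              (c z' u + β * ∫ z₁, v k z₁ ∂(η z' u))|
              ≤ auxL S β αc αZ (k + 1) * dist z z' := by
          intro u
          have h1 := hc_lip z z' u
          have h2 := hη_contract (v k) (auxA S β k + auxL S β αc αZ k)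
            ⟨auxA S β k, auxL S β αc αZ k, hA0, hL0, le_rfl, ihA, ihL⟩ u z z'
          have h3 : β * |(∫ x, v k x ∂(η z u)) - ∫ x, v k x ∂(η z' u)|
              ≤ β * (αZ * (auxA S β k + auxL S β αc αZ k) * dist z z') :=
            mul_le_mul_of_nonneg_left h2 hβ0.le
          calc |(c z u + β * ∫ z₁, v k z₁ ∂(η z u)) -
                (c z' u + β * ∫ z₁, v k z₁ ∂(η z' u))|
              = |(c z u - c z' u) +
                  β * ((∫ x, v k x ∂(η z u)) - ∫ x, v k x ∂(η z' u))| := by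
                ring_nf
            _ ≤ |c z u - c z' u| +
                  |β * ((∫ x, v k x ∂(η z u)) - ∫ x, v k x ∂(η z' u))| := abs_add_le _ _
            _ = |c z u - c z' u| +
                  β * |(∫ x, v k x ∂(η z u)) - ∫ x, v k x ∂(η z' u)| := by
                rw [abs_mul, abs_of_nonneg hβ0.le]
            _ ≤ αc * dist z z' +
                  β * (αZ * (auxA S β k + auxL S β αc αZ k) * dist z z') :=
                add_le_add h1 h3
            _ = (αc + β * αZ * (auxA S β k + auxL S β αc αZ k)) * dist z z' := by
                ring
            _ = auxL S β αc αZ (k + 1) * dist z z' := rfl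
        have hterm1 : ∀ u : U,
            (c z u + β * ∫ z₁, v k z₁ ∂(η z u)) -
              (c z' u + β * ∫ z₁, v k z₁ ∂(η z' u)) ≤
              auxL S β αc αZ (k + 1) * dist z z' :=
          fun u => (abs_le.mp (hterm u)).2
        have hterm2 : ∀ u : U,
            (c z' u + β * ∫ z₁, v k z₁ ∂(η z' u)) -
              (c z u + β * ∫ z₁, v k z₁ ∂(η z u)) ≤
              auxL S β αc αZ (k + 1) * dist z z' := by
          intro u
          have h := (abs_le.mp (hterm u)).1
          linarith
        rw [abs_sub_le_iff]
        constructor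
        · have h := hinf_le (fun u => c z u + β * ∫ z₁, v k z₁ ∂(η z u))
            (fun u => c z' u + β * ∫ z₁, v k z₁ ∂(η z' u))
            (auxL S β αc αZ (k + 1) * dist z z') hterm1
          linarith
        · have h := hinf_le (fun u => c z' u + β * ∫ z₁, v k z₁ ∂(η z' u))
            (fun u => c z u + β * ∫ z₁, v k z₁ ∂(η z u))
            (auxL S β αc αZ (k + 1) * dist z z') hterm2
          linarith
  constructor
  · intro k _
    obtain ⟨hA0, hL0⟩ := auxAL_nonneg S β αc αZ hS0 hβ0.le hαc hαZ k
    exact ⟨auxA S β k, auxL S β αc αZ k, hA0, hL0,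
      (auxAL_eq S β αc αZ (ne_of_lt hβ1) k).2.le, (hmain k).1, (hmain k).2⟩
  · intro hβZ k
    obtain ⟨hA0, hL0⟩ := auxAL_nonneg S β αc αZ hS0 hβ0.le hαc hαZ k
    exact ⟨auxA S β k, auxL S β αc αZ k, hA0, hL0,
      (auxAL_bdd S β αc αZ hS0 hβ0 hβ1 hαc hαZ hβZ k).2, (hmain k).1, (hmain k).2⟩
end

section
/- Let (Z,d) be a metric space, U a finite nonempty set, β ∈ (0,1) with βα_Z < 1, c : Z×U → ℝ bounded measurable with |c(z,u) − c(z',u)| ≤ α_c d(z,z') for all z, z' ∈ Z and u ∈ U, and let η be a Markov kernel from Z×U to Z satisfying the bounded-Lipschitz contraction condition with constant α_Z. If J : Z → ℝ is a bounded Lipschitz function satisfying the fixed-point equation J(z) = min_{u∈U} ( c(z,u) + β ∫ J(z₁) η(dz₁|z,u) ) for all z ∈ Z, then ‖J‖_BL ≤ (1/(1 − βα_Z)) ( ‖c‖_∞/(1 − β) + α_c ). -/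
set_option maxHeartbeats 1000000

open MeasureTheory

theorem statement8 {Z U : Type*} [MetricSpace Z] [MeasurableSpace Z] [BorelSpace Z]
    [Fintype U] [Nonempty U]
    (β : ℝ) (hβ0 : 0 < β) (hβ1 : β < 1)
    (c : Z → U → ℝ)
    (hc_meas : ∀ u : U, Measurable fun z : Z => c z u)
    (hc_bdd : ∃ M : ℝ, ∀ (z : Z) (u : U), |c z u| ≤ M)
    (αc : ℝ) (hαc : 0 ≤ αc)
    (hc_lip : ∀ (z z' : Z) (u : U), |c z u - c z' u| ≤ αc * dist z z')
    (η : Z → U → MeasureTheory.Measure Z)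
    (hη_meas : ∀ u : U, Measurable fun z : Z => η z u)
    (hη_prob : ∀ (z : Z) (u : U), MeasureTheory.IsProbabilityMeasure (η z u))
    (αZ : ℝ) (hαZ : 0 ≤ αZ)
    (hη_contract : blContract η αZ)
    (hβαZ : β * αZ < 1)
    (J : Z → ℝ)
    (hJ_bl : ∃ C : ℝ, blNormLE dist J C)
    (hJ_fix : ∀ z : Z, J z = ⨅ u : U, (c z u + β * ∫ z₁, J z₁ ∂(η z u))) :
    blNormLE dist J (1 / (1 - β * αZ) * (supNorm c / (1 - β) + αc)) := by

  classical
  obtain ⟨C0, a0, b0, ha0, hb0, hab0, hJa0, hJb0⟩ := hJ_bl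
  have hJcont : Continuous J := by
    have hlip : LipschitzWith ⟨b0, hb0⟩ J := by
      apply LipschitzWith.of_dist_le_mul
      intro x y
      exact hJb0 x y
    exact hlip.continuous
  have hJmeas : Measurable J := hJcont.measurable
  set q : ℝ := β * αZ with hq
  have hq0 : 0 ≤ q := mul_nonneg hβ0.le hαZ
  have hq1 : q < 1 := hβαZ
  have h1q : 0 < 1 - q := by linarith
  have h1β : 0 < 1 - β := by linarith
  set S : ℝ := supNorm c with hSdef
  have hS0 : 0 ≤ S := Real.iSup_nonneg fun p => abs_nonneg _
  obtain ⟨M, hM⟩ := hc_bdd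
  have hSle : ∀ (z : Z) (u : U), |c z u| ≤ S := by
    intro z u
    exact le_ciSup ⟨M, by rintro x ⟨p, rfl⟩; exact hM p.1 p.2⟩ ((z, u) : Z × U)
  set K0 : ℝ := S / (1 - β) with hK0
  have hK00 : 0 ≤ K0 := div_nonneg hS0 h1β.le
  set Cs : ℝ := (K0 + αc) / (1 - q) with hCs
  have hCs0 : 0 ≤ Cs := div_nonneg (by linarith) h1q.le
  have hCseq : Cs * (1 - q) = K0 + αc := by
    rw [hCs]; field_simp
  have hgoal_eq : 1 / (1 - q) * (K0 + αc) = Cs := by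
    rw [hCs]; ring
  rcases isEmpty_or_nonempty Z with hZ | hZ
  · exact ⟨0, 0, le_refl 0, le_refl 0, by rw [hgoal_eq]; linarith,
      fun x => isEmptyElim x, fun x _ => isEmptyElim x⟩
  -- integrability
  have hint : ∀ (z : Z) (u : U), Integrable J (η z u) := by
    intro z u
    haveI := hη_prob z u
    exact (integrable_const a0).mono' hJmeas.aestronglyMeasurable
      (Filter.Eventually.of_forall fun x => by simpa using hJa0 x)
  -- sup bound
  set A : ℝ := ⨆ z, |J z| with hA
  have hbddA : BddAbove (Set.range fun z : Z => |J z|) :=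
    ⟨a0, by rintro x ⟨z, rfl⟩; exact hJa0 z⟩
  have hA_le : ∀ z, |J z| ≤ A := fun z => le_ciSup hbddA z
  have hA0 : 0 ≤ A := le_trans (abs_nonneg _) (hA_le hZ.some)
  have hintle : ∀ (z : Z) (u : U), |∫ x, J x ∂(η z u)| ≤ A := by
    intro z u
    haveI := hη_prob z u
    calc |∫ x, J x ∂(η z u)| = ‖∫ x, J x ∂(η z u)‖ := rfl
      _ ≤ A * ((η z u) Set.univ).toReal :=
        norm_integral_le_of_norm_le_const (Filter.Eventually.of_forall fun x => by
          simpa using hA_le x)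
      _ = A := by simp
  have hstep : ∀ z, |J z| ≤ S + β * A := by
    intro z
    obtain ⟨u₀, hu₀⟩ := exists_eq_ciInf_of_finite
      (f := fun u : U => c z u + β * ∫ z₁, J z₁ ∂(η z u))
    rw [hJ_fix z, ← hu₀]
    calc |c z u₀ + β * ∫ z₁, J z₁ ∂(η z u₀)|
        ≤ |c z u₀| + β * |∫ z₁, J z₁ ∂(η z u₀)| := by
          refine (abs_add_le _ _).trans ?_
          rw [abs_mul, abs_of_nonneg hβ0.le]
      _ ≤ S + β * A := add_le_add (hSle z u₀)
          (mul_le_mul_of_nonneg_left (hintle z u₀) hβ0.le)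
  have hAK : A ≤ K0 := by
    have h := ciSup_le hstep
    rw [hK0, le_div_iff₀ h1β]
    nlinarith [h]
  have hJK0 : ∀ z, |J z| ≤ K0 := fun z => (hA_le z).trans hAK
  -- Lipschitz improvement
  have key : ∀ C : ℝ, blNormLE dist J C →
      ∀ z z' : Z, |J z - J z'| ≤ (αc + q * C) * dist z z' := by
    intro C hC z z'
    have half : ∀ x y : Z, J x - J y ≤ (αc + q * C) * dist x y := by
      intro x y
      obtain ⟨u₀, hu₀⟩ := exists_eq_ciInf_of_finite
        (f := fun u : U => c y u + β * ∫ z₁, J z₁ ∂(η y u))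
      have hxle : J x ≤ c x u₀ + β * ∫ z₁, J z₁ ∂(η x u₀) := by
        rw [hJ_fix x]
        exact ciInf_le (Finite.bddBelow_range _) u₀
      have hyeq : J y = c y u₀ + β * ∫ z₁, J z₁ ∂(η y u₀) := by rw [hJ_fix y, ← hu₀]
      have hcontr := hη_contract J C hC u₀ x y
      have h1 : c x u₀ - c y u₀ ≤ αc * dist x y := (le_abs_self _).trans (hc_lip x y u₀)
      have h2 : (∫ z₁, J z₁ ∂(η x u₀)) - (∫ z₁, J z₁ ∂(η y u₀)) ≤ αZ * C * dist x y :=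
        (le_abs_self _).trans hcontr
      have h3 := mul_le_mul_of_nonneg_left h2 hβ0.le
      have h4 : J x - J y ≤ αc * dist x y + β * (αZ * C * dist x y) := by
        rw [hyeq]; nlinarith [hxle, h1, h3]
      calc J x - J y ≤ αc * dist x y + β * (αZ * C * dist x y) := h4
        _ = (αc + q * C) * dist x y := by rw [hq]; ring
    rw [abs_sub_le_iff]
    exact ⟨half z z', by simpa [dist_comm] using half z' z⟩
  -- induction
  set D : ℝ := max C0 0 with hD
  have hD0 : 0 ≤ D := le_max_right _ _
  have ind : ∀ n : ℕ, blNormLE dist J (Cs + q ^ n * D) := by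
    intro n
    induction n with
    | zero =>
      refine ⟨a0, b0, ha0, hb0, ?_, hJa0, hJb0⟩
      have hle : C0 ≤ D := le_max_left _ _
      simp only [pow_zero, one_mul]
      linarith
    | succ n ih =>
      have hCn0 : 0 ≤ Cs + q ^ n * D := by positivity
      refine ⟨K0, αc + q * (Cs + q ^ n * D), hK00, ?_, ?_, hJK0, ?_⟩
      · positivity
      · rw [pow_succ]; nlinarith [hCseq, sq_nonneg q]
      · intro x y; exact key _ ih x y
  -- passing to the limit
  have hlimb : ∀ x y : Z, |J x - J y| ≤ (Cs - K0) * dist x y := by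
    intro x y
    have hbound : ∀ n : ℕ, |J x - J y| ≤ (Cs - K0 + q ^ (n + 1) * D) * dist x y := by
      intro n
      have hk := key _ (ind n) x y
      have heq : (αc + q * (Cs + q ^ n * D)) = (αc + q * Cs) + q ^ (n + 1) * D := by
        rw [pow_succ]; ring
      have hck : Cs - K0 = αc + q * Cs := by linarith [hCseq]
      rw [hck, ← heq]
      exact hk
    have htend : Filter.Tendsto (fun n : ℕ => (Cs - K0 + q ^ (n + 1) * D) * dist x y)
        Filter.atTop (nhds ((Cs - K0 + 0 * D) * dist x y)) := by
      refine Filter.Tendsto.mul_const _ (Filter.Tendsto.const_add _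
        (Filter.Tendsto.mul_const _ ?_))
      exact (tendsto_pow_atTop_nhds_zero_of_lt_one hq0 hq1).comp (Filter.tendsto_add_atTop_nat 1)
    have hrw : (Cs - K0) * dist x y = (Cs - K0 + 0 * D) * dist x y := by ring
    rw [hrw]
    exact ge_of_tendsto' htend hbound
  rw [hgoal_eq]
  have hCsK0 : K0 ≤ Cs := by nlinarith [hCseq, mul_nonneg hq0 hCs0]
  exact ⟨K0, Cs - K0, hK00, by linarith, by linarith, hJK0, hlimb⟩
end

section
/- Let (Z,d) be a metric space, U a finite nonempty set, β ∈ (0,1) with βα_Z < 1, c : Z×U → ℝ bounded measurable with |c(z,u) − c(z',u)| ≤ ‖c‖_∞ d(z,z') for all z, z' ∈ Z and u ∈ U, and let η be a Markov kernel from Z×U to Z satisfying the bounded-Lipschitz contraction condition with constant α_Z. If J : Z → ℝ is a bounded Lipschitz function satisfying the fixed-point equation J(z) = min_{u∈U} ( c(z,u) + β ∫ J(z₁) η(dz₁|z,u) ) for all z ∈ Z, then ‖J‖_BL ≤ ((2 − β)/((1 − β)(1 − βα_Z))) ‖c‖_∞. (This applies in particular when Z is the set of probability measures on a Borel space X metrized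 by total variation and c(z,u) = ∫ c₀(x,u) z(dx) for a bounded measurable stage cost c₀.) -/
open MeasureTheory

theorem statement9 {Z U : Type*} [MetricSpace Z] [MeasurableSpace Z] [BorelSpace Z]
    [Fintype U] [Nonempty U]
    (β : ℝ) (hβ0 : 0 < β) (hβ1 : β < 1)
    (c : Z → U → ℝ)
    (hc_meas : ∀ u : U, Measurable fun z : Z => c z u)
    (hc_bdd : ∃ M : ℝ, ∀ (z : Z) (u : U), |c z u| ≤ M)
    (hc_lip : ∀ (z z' : Z) (u : U), |c z u - c z' u| ≤ supNorm c * dist z z')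
    (η : Z → U → MeasureTheory.Measure Z)
    (hη_meas : ∀ u : U, Measurable fun z : Z => η z u)
    (hη_prob : ∀ (z : Z) (u : U), MeasureTheory.IsProbabilityMeasure (η z u))
    (αZ : ℝ) (hαZ : 0 ≤ αZ)
    (hη_contract : blContract η αZ)
    (hβαZ : β * αZ < 1)
    (J : Z → ℝ)
    (hJ_bl : ∃ C : ℝ, blNormLE dist J C)
    (hJ_fix : ∀ z : Z, J z = ⨅ u : U, (c z u + β * ∫ z₁, J z₁ ∂(η z u))) :
    blNormLE dist J ((2 - β) / ((1 - β) * (1 - β * αZ)) * supNorm c) := by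
  classical
  obtain ⟨C0, a₀, b₀, ha₀, hb₀, hab₀, hJa₀, hJb₀⟩ := hJ_bl
  set K := supNorm c with hK
  set q := β * αZ with hqdef
  have hq0 : 0 ≤ q := mul_nonneg hβ0.le hαZ
  have h1β : 0 < 1 - β := by linarith
  have h1q : 0 < 1 - q := by linarith
  -- bounds on c
  obtain ⟨M, hM⟩ := hc_bdd
  have hbdd : BddAbove (Set.range fun p : Z × U => |c p.1 p.2|) :=
    ⟨M, by rintro x ⟨p, rfl⟩; exact hM p.1 p.2⟩
  have hKnn : 0 ≤ K := Real.iSup_nonneg fun p => abs_nonneg _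
  have hKb : ∀ (z : Z) (u : U), |c z u| ≤ K := fun z u =>
    le_ciSup hbdd (⟨z, u⟩ : Z × U)
  set A := K / (1 - β) with hAdef
  have hA0 : 0 ≤ A := div_nonneg hKnn h1β.le
  set B := (K + q * A) / (1 - q) with hBdef
  have hB0 : 0 ≤ B := div_nonneg (by positivity) h1q.le
  have hKA : K + β * A = A := by
    rw [hAdef]; field_simp; ring
  have hKB : K + q * (A + B) = B := by
    rw [hBdef]; field_simp; ring
  -- J is continuous, hence measurable
  have hJcont : Continuous J := by
    have : LipschitzWith (Real.toNNReal b₀) J := by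
      apply LipschitzWith.of_dist_le_mul
      intro x y
      rw [Real.dist_eq, Real.coe_toNNReal b₀ hb₀]
      exact hJb₀ x y
    exact this.continuous
  have hJint : ∀ (z : Z) (u : U), Integrable J (η z u) := by
    intro z u
    haveI := hη_prob z u
    exact (integrable_const a₀).mono' hJcont.aestronglyMeasurable
      (Filter.Eventually.of_forall fun x => by
        simpa [Real.norm_eq_abs] using hJa₀ x)
  have hIntAbs : ∀ (a : ℝ), (∀ z, |J z| ≤ a) → ∀ (z : Z) (u : U),
      |∫ z₁, J z₁ ∂(η z u)| ≤ a := by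
    intro a ha z u
    haveI := hη_prob z u
    have := norm_integral_le_of_norm_le_const (μ := η z u) (f := J) (C := a)
      (Filter.Eventually.of_forall fun x => by simpa [Real.norm_eq_abs] using ha x)
    simpa [Real.norm_eq_abs, measure_univ] using this
  -- minimizer form of the fixed point equation
  have hmin : ∀ z : Z, ∃ u₀ : U,
      J z = c z u₀ + β * ∫ z₁, J z₁ ∂(η z u₀) ∧
      ∀ u : U, J z ≤ c z u + β * ∫ z₁, J z₁ ∂(η z u) := by
    intro z
    obtain ⟨u₀, hu₀⟩ := Finite.exists_min
      (fun u : U => c z u + β * ∫ z₁, J z₁ ∂(η z u))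
    have heq : J z = c z u₀ + β * ∫ z₁, J z₁ ∂(η z u₀) := by
      rw [hJ_fix z]
      exact le_antisymm (ciInf_le (Finite.bddBelow_range _) u₀) (le_ciInf hu₀)
    exact ⟨u₀, heq, fun u => heq ▸ hu₀ u⟩
  -- one-step improvement of the sup bound
  have stepBound : ∀ a : ℝ, (∀ z, |J z| ≤ a) → ∀ z : Z, |J z| ≤ K + β * a := by
    intro a ha z
    obtain ⟨u₀, heq, -⟩ := hmin z
    rw [heq]
    calc |c z u₀ + β * ∫ z₁, J z₁ ∂(η z u₀)|
        ≤ |c z u₀| + |β * ∫ z₁, J z₁ ∂(η z u₀)| := abs_add_le _ _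
      _ ≤ K + β * a := by
          have h1 := hKb z u₀
          have h2 := hIntAbs a ha z u₀
          rw [abs_mul, abs_of_pos hβ0]
          have : β * |∫ z₁, J z₁ ∂(η z u₀)| ≤ β * a :=
            mul_le_mul_of_nonneg_left h2 hβ0.le
          linarith
  -- one-step improvement of the Lipschitz bound
  have stepLip : ∀ a b : ℝ, 0 ≤ a → 0 ≤ b → (∀ z, |J z| ≤ a) →
      (∀ z z', |J z - J z'| ≤ b * dist z z') →
      ∀ z z', |J z - J z'| ≤ (K + q * (a + b)) * dist z z' := by
    intro a b ha0 hb0 ha hb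
    have key : ∀ w w' : Z, J w - J w' ≤ (K + q * (a + b)) * dist w w' := by
      intro w w'
      obtain ⟨u', heq', -⟩ := hmin w'
      obtain ⟨-, -, hle⟩ := hmin w
      have h1 : J w ≤ c w u' + β * ∫ z₁, J z₁ ∂(η w u') := hle u'
      have hcontr := hη_contract J (a + b)
        ⟨a, b, ha0, hb0, le_refl _, ha, hb⟩ u' w w'
      have h2 : ∫ z₁, J z₁ ∂(η w u') - ∫ z₁, J z₁ ∂(η w' u')
          ≤ αZ * (a + b) * dist w w' := (abs_le.mp hcontr).2
      have h3 : c w u' - c w' u' ≤ K * dist w w' :=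
        (abs_le.mp (hc_lip w w' u')).2
      calc J w - J w' ≤ (c w u' + β * ∫ z₁, J z₁ ∂(η w u'))
            - (c w' u' + β * ∫ z₁, J z₁ ∂(η w' u')) := by rw [heq']; linarith
        _ = (c w u' - c w' u')
            + β * (∫ z₁, J z₁ ∂(η w u') - ∫ z₁, J z₁ ∂(η w' u')) := by ring
        _ ≤ K * dist w w' + β * (αZ * (a + b) * dist w w') := by
            have := mul_le_mul_of_nonneg_left h2 hβ0.le
            linarith
        _ = (K + q * (a + b)) * dist w w' := by rw [hqdef]; ring
    intro z z'
    rw [abs_sub_le_iff]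
    refine ⟨key z z', ?_⟩
    have := key z' z
    rwa [dist_comm] at this
  -- iterate the sup bound
  have hA_iter : ∀ n : ℕ, ∀ z : Z, |J z| ≤ A + β ^ n * a₀ := by
    intro n
    induction n with
    | zero => intro z; simpa using le_trans (hJa₀ z) (by linarith)
    | succ n ih =>
        intro z
        have := stepBound (A + β ^ n * a₀) ih z
        calc |J z| ≤ K + β * (A + β ^ n * a₀) := this
          _ = (K + β * A) + β ^ (n + 1) * a₀ := by ring
          _ = A + β ^ (n + 1) * a₀ := by rw [hKA]
  have hJA : ∀ z : Z, |J z| ≤ A := by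
    intro z
    have ht : Filter.Tendsto (fun n : ℕ => A + β ^ n * a₀) Filter.atTop
        (nhds (A + 0 * a₀)) := by
      exact (((tendsto_pow_atTop_nhds_zero_of_lt_one hβ0.le hβ1).mul_const a₀).const_add A)
    have := ge_of_tendsto' ht (fun n => hA_iter n z)
    simpa using this
  -- iterate the Lipschitz bound
  have hB_iter : ∀ n : ℕ, ∀ z z' : Z,
      |J z - J z'| ≤ (B + q ^ n * b₀) * dist z z' := by
    intro n
    induction n with
    | zero =>
        intro z z'
        refine le_trans (hJb₀ z z') ?_
        have : b₀ ≤ B + 1 * b₀ := by linarith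
        simpa using mul_le_mul_of_nonneg_right (by simpa using this) dist_nonneg
    | succ n ih =>
        intro z z'
        have hbn : 0 ≤ B + q ^ n * b₀ := by positivity
        have := stepLip A (B + q ^ n * b₀) hA0 hbn hJA ih z z'
        calc |J z - J z'| ≤ (K + q * (A + (B + q ^ n * b₀))) * dist z z' := this
          _ = ((K + q * (A + B)) + q ^ (n + 1) * b₀) * dist z z' := by ring
          _ = (B + q ^ (n + 1) * b₀) * dist z z' := by rw [hKB]
  have hJB : ∀ z z' : Z, |J z - J z'| ≤ B * dist z z' := by
    intro z z'
    have ht : Filter.Tendsto (fun n : ℕ => (B + q ^ n * b₀) * dist z z')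
        Filter.atTop (nhds ((B + 0 * b₀) * dist z z')) := by
      exact ((((tendsto_pow_atTop_nhds_zero_of_lt_one hq0 hβαZ).mul_const b₀).const_add
        B).mul_const _)
    have := ge_of_tendsto' ht (fun n => hB_iter n z z')
    simpa using this
  refine ⟨A, B, hA0, hB0, ?_, hJA, hJB⟩
  apply le_of_eq
  rw [hAdef, hBdef, hAdef]
  field_simp
  ring
end

section
/- Let (Z,d) be a metric space, U a finite nonempty set, β ∈ (0,1) with βα_Z < 1, c : Z×U → ℝ bounded measurable with |c(z,u) − c(z',u)| ≤ ‖c‖_∞ d(z,z') for all z, z' ∈ Z and u ∈ U, and let η be a Markov kernel from Z×U to Z satisfying the bounded-Lipschitz contraction condition with constant α_Z. Let F : Z → Z be measurable with sup_{z∈Z} d(z, F(z)) ≤ L̄ < ∞. Let J* : Z → ℝ be a bounded Lipschitz function satisfying J*(z) = min_{u∈U} ( c(z,u) + β ∫ J*(z₁) η(dz₁|z,u) ) for all z, and let J^N : Z → ℝ be a bounded measurable function satisfying J^N(z) = min_{u∈U} ( c(F(z),u) + β ∫ J^N(z₁) η(dz₁|F(z),u) ) for all z. Then sup_{z∈Z}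 |J^N(z) − J*(z)| ≤ ( ((α_Z − 1)β + 1) / ((1 − β)² (1 − α_Z β)) ) ‖c‖_∞ L̄. -/
open MeasureTheory

private lemma ciInf_sub_ciInf_le_aux {U : Type*} [Fintype U] [Nonempty U]
    (g h : U → ℝ) {C : ℝ} (hC : ∀ u, g u - h u ≤ C) :
    (⨅ u, g u) - (⨅ u, h u) ≤ C := by
  obtain ⟨u, hu⟩ := Finite.exists_min h
  have h1 : (⨅ u, g u) ≤ g u := ciInf_le ((Set.finite_range g).bddBelow) u
  have h2 : h u ≤ ⨅ u, h u := le_ciInf hu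
  linarith [hC u]

private lemma abs_ciInf_sub_ciInf_le {U : Type*} [Fintype U] [Nonempty U]
    (g h : U → ℝ) {C : ℝ} (hC : ∀ u, |g u - h u| ≤ C) :
    |(⨅ u, g u) - (⨅ u, h u)| ≤ C := by
  rw [abs_sub_le_iff]
  constructor
  · exact ciInf_sub_ciInf_le_aux g h fun u => (abs_le.1 (hC u)).2
  · exact ciInf_sub_ciInf_le_aux h g fun u => by
      have := (abs_le.1 (hC u)).1; linarith

private lemma abs_ciInf_le_of_abs_le {U : Type*} [Fintype U] [Nonempty U]
    (g : U → ℝ) {C : ℝ} (hC : ∀ u, |g u| ≤ C) : |⨅ u, g u| ≤ C := by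
  have := abs_ciInf_sub_ciInf_le g (fun _ => (0 : ℝ)) (C := C) (by simpa using hC)
  simpa using this

private lemma abs_integral_le_of_abs_le {Z : Type*} [MeasurableSpace Z]
    (μ : Measure Z) [IsProbabilityMeasure μ] (f : Z → ℝ) {C : ℝ}
    (h : ∀ x, |f x| ≤ C) : |∫ x, f x ∂μ| ≤ C := by
  have := norm_integral_le_of_norm_le_const (μ := μ) (f := f) (C := C)
    (Filter.Eventually.of_forall fun x => by simpa [Real.norm_eq_abs] using h x)
  simpa [Real.norm_eq_abs, measure_univ] using this

private lemma integrable_of_abs_le {Z : Type*} [MeasurableSpace Z]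
    (μ : Measure Z) [IsProbabilityMeasure μ] (f : Z → ℝ) (hf : Measurable f)
    {C : ℝ} (h : ∀ x, |f x| ≤ C) : Integrable f μ :=
  (integrable_const C).mono' hf.aestronglyMeasurable
    (Filter.Eventually.of_forall fun x => by simpa [Real.norm_eq_abs] using h x)

private lemma abs_integral_sub_integral_le {Z : Type*} [MeasurableSpace Z]
    (μ : Measure Z) [IsProbabilityMeasure μ] (f g : Z → ℝ)
    (hf : Integrable f μ) (hg : Integrable g μ) {C : ℝ}
    (h : ∀ x, |f x - g x| ≤ C) :
    |(∫ x, f x ∂μ) - ∫ x, g x ∂μ| ≤ C := by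
  rw [← integral_sub hf hg]
  exact abs_integral_le_of_abs_le μ _ h

theorem statement10 {Z U : Type*} [MetricSpace Z] [MeasurableSpace Z] [BorelSpace Z]
    [Fintype U] [Nonempty U]
    (β : ℝ) (hβ0 : 0 < β) (hβ1 : β < 1)
    (c : Z → U → ℝ)
    (hc_meas : ∀ u : U, Measurable fun z : Z => c z u)
    (hc_bdd : ∃ M : ℝ, ∀ (z : Z) (u : U), |c z u| ≤ M)
    (hc_lip : ∀ (z z' : Z) (u : U), |c z u - c z' u| ≤ supNorm c * dist z z')
    (η : Z → U → MeasureTheory.Measure Z)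
    (hη_meas : ∀ u : U, Measurable fun z : Z => η z u)
    (hη_prob : ∀ (z : Z) (u : U), MeasureTheory.IsProbabilityMeasure (η z u))
    (αZ : ℝ) (hαZ : 0 ≤ αZ)
    (hη_contract : blContract η αZ)
    (hβαZ : β * αZ < 1)
    (F : Z → Z) (hF_meas : Measurable F)
    (Lbar : ℝ) (hF_close : ∀ z : Z, dist z (F z) ≤ Lbar)
    (Jstar : Z → ℝ)
    (hJstar_bl : ∃ C : ℝ, blNormLE dist Jstar C)
    (hJstar_fix : ∀ z : Z, Jstar z = ⨅ u : U, (c z u + β * ∫ z₁, Jstar z₁ ∂(η z u)))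
    (JN : Z → ℝ)
    (hJN_meas : Measurable JN)
    (hJN_bdd : ∃ M : ℝ, ∀ z : Z, |JN z| ≤ M)
    (hJN_fix : ∀ z : Z, JN z = ⨅ u : U, (c (F z) u + β * ∫ z₁, JN z₁ ∂(η (F z) u))) :
    ∀ z : Z, |JN z - Jstar z| ≤
      ((αZ - 1) * β + 1) / ((1 - β) ^ 2 * (1 - αZ * β)) * supNorm c * Lbar := by
  intro z₀
  obtain ⟨M, hM⟩ := hc_bdd
  obtain ⟨C₀, a₀, b₀, ha₀, hb₀, hab₀, hJa, hJb⟩ := hJstar_bl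
  obtain ⟨MN, hMN⟩ := hJN_bdd
  have hη := hη_prob
  -- basic facts about supNorm
  set K := supNorm c with hK
  have hKub : ∀ (z : Z) (u : U), |c z u| ≤ K := by
    intro z u
    exact le_ciSup (f := fun p : Z × U => |c p.1 p.2|)
      ⟨M, by rintro _ ⟨p, rfl⟩; exact hM p.1 p.2⟩ (z, u)
  have hK0 : 0 ≤ K := le_trans (abs_nonneg _) (hKub z₀ (Classical.arbitrary U))
  -- positivity
  have h1β : (0:ℝ) < 1 - β := by linarith
  have h1βα : (0:ℝ) < 1 - β * αZ := by linarith
  have hq0 : (0:ℝ) ≤ β * αZ := mul_nonneg hβ0.le hαZ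
  have hLbar0 : 0 ≤ Lbar := le_trans dist_nonneg (hF_close z₀)
  -- constants
  set A : ℝ := K / (1 - β) with hA
  set L : ℝ := (K + β * αZ * A) / (1 - β * αZ) with hL
  have hA0 : 0 ≤ A := div_nonneg hK0 h1β.le
  have hL0 : 0 ≤ L := div_nonneg (by positivity) h1βα.le
  have hKA : K = (1 - β) * A := by rw [hA]; field_simp
  have hKL : K + β * αZ * A = (1 - β * αZ) * L := by rw [hL]; field_simp
  -- Jstar is measurable (it is Lipschitz)
  have hJstar_meas : Measurable Jstar := by
    have : LipschitzWith (Real.toNNReal b₀) Jstar := by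
      apply LipschitzWith.of_dist_le_mul
      intro x y
      rw [Real.dist_eq, Real.coe_toNNReal _ hb₀]
      exact hJb x y
    exact this.continuous.measurable
  -- Step 1: |Jstar z| ≤ A
  have key1 : ∀ n : ℕ, ∀ z : Z, |Jstar z| ≤ A + β ^ n * (a₀ - A) := by
    intro n
    induction n with
    | zero =>
      intro z
      calc |Jstar z| ≤ a₀ := hJa z
        _ = A + β ^ 0 * (a₀ - A) := by ring
    | succ n ih =>
      intro z
      rw [hJstar_fix z]
      apply abs_ciInf_le_of_abs_le
      intro u
      have hI : |∫ z₁, Jstar z₁ ∂(η z u)| ≤ A + β ^ n * (a₀ - A) :=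
        abs_integral_le_of_abs_le (η z u) Jstar (ih)
      calc |c z u + β * ∫ z₁, Jstar z₁ ∂(η z u)|
          ≤ |c z u| + |β * ∫ z₁, Jstar z₁ ∂(η z u)| := abs_add_le _ _
        _ = |c z u| + β * |∫ z₁, Jstar z₁ ∂(η z u)| := by
            rw [abs_mul, abs_of_nonneg hβ0.le]
        _ ≤ K + β * (A + β ^ n * (a₀ - A)) := by
            have := hKub z u
            have := mul_le_mul_of_nonneg_left hI hβ0.le
            linarith
        _ = A + β ^ (n+1) * (a₀ - A) := by rw [hKA]; ring
  have hbound : ∀ z : Z, |Jstar z| ≤ A := by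
    intro z
    have h0 : Filter.Tendsto (fun n : ℕ => β ^ n) Filter.atTop (nhds 0) :=
      tendsto_pow_atTop_nhds_zero_of_lt_one hβ0.le hβ1
    have ht : Filter.Tendsto (fun n : ℕ => A + β ^ n * (a₀ - A)) Filter.atTop (nhds A) := by
      simpa using (tendsto_const_nhds (x := A)).add (h0.mul_const (a₀ - A))
    exact ge_of_tendsto ht (Filter.Eventually.of_forall fun n => key1 n z)
  -- Step 2: Jstar is L-Lipschitz
  have key2 : ∀ n : ℕ, ∀ x y : Z,
      |Jstar x - Jstar y| ≤ (L + (β * αZ) ^ n * (b₀ - L)) * dist x y := by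
    intro n
    induction n with
    | zero =>
      intro x y
      calc |Jstar x - Jstar y| ≤ b₀ * dist x y := hJb x y
        _ = (L + (β * αZ) ^ 0 * (b₀ - L)) * dist x y := by ring
    | succ n ih =>
      intro x y
      set Ln : ℝ := L + (β * αZ) ^ n * (b₀ - L) with hLn
      have hLn0 : 0 ≤ Ln := by
        have h1 : (β * αZ) ^ n ≤ 1 := pow_le_one₀ hq0 hβαZ.le
        have h2 : 0 ≤ (β * αZ) ^ n := pow_nonneg hq0 n
        nlinarith
      have hbl : blNormLE dist Jstar (A + Ln) :=
        ⟨A, Ln, hA0, hLn0, le_refl _, hbound, ih⟩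
      rw [hJstar_fix x, hJstar_fix y]
      apply abs_ciInf_sub_ciInf_le
      intro u
      have hc' := hc_lip x y u
      have hint := hη_contract Jstar (A + Ln) hbl u x y
      calc |c x u + β * (∫ z₁, Jstar z₁ ∂(η x u)) -
              (c y u + β * ∫ z₁, Jstar z₁ ∂(η y u))|
          ≤ |c x u - c y u| +
              |β * ((∫ z₁, Jstar z₁ ∂(η x u)) - ∫ z₁, Jstar z₁ ∂(η y u))| := by
            have := abs_add_le (c x u - c y u)
              (β * ((∫ z₁, Jstar z₁ ∂(η x u)) - ∫ z₁, Jstar z₁ ∂(η y u)))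
            calc |c x u + β * (∫ z₁, Jstar z₁ ∂(η x u)) -
                (c y u + β * ∫ z₁, Jstar z₁ ∂(η y u))|
                = |(c x u - c y u) +
                    β * ((∫ z₁, Jstar z₁ ∂(η x u)) - ∫ z₁, Jstar z₁ ∂(η y u))| := by
                  ring_nf
              _ ≤ _ := this
        _ = |c x u - c y u| +
              β * |(∫ z₁, Jstar z₁ ∂(η x u)) - ∫ z₁, Jstar z₁ ∂(η y u)| := by
            rw [abs_mul, abs_of_nonneg hβ0.le]
        _ ≤ K * dist x y + β * (αZ * (A + Ln) * dist x y) := by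
            have := mul_le_mul_of_nonneg_left hint hβ0.le
            linarith
        _ = (L + (β * αZ) ^ (n+1) * (b₀ - L)) * dist x y := by
            have h : K + β * αZ * A + β * αZ * Ln
                = L + (β * αZ) ^ (n+1) * (b₀ - L) := by
              rw [hKL, hLn]; ring
            linear_combination (dist x y) * h
  have hlip : ∀ x y : Z, |Jstar x - Jstar y| ≤ L * dist x y := by
    intro x y
    have h0 : Filter.Tendsto (fun n : ℕ => (β * αZ) ^ n) Filter.atTop (nhds 0) :=
      tendsto_pow_atTop_nhds_zero_of_lt_one hq0 hβαZ
    have ht : Filter.Tendsto (fun n : ℕ => (L + (β * αZ) ^ n * (b₀ - L)) * dist x y)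
        Filter.atTop (nhds (L * dist x y)) := by
      have := (((tendsto_const_nhds (x := L)).add (h0.mul_const (b₀ - L))).mul_const (dist x y))
      simpa using this
    exact ge_of_tendsto ht (Filter.Eventually.of_forall fun n => key2 n x y)
  -- Step 3: error recursion
  set D : ℝ := L * Lbar / (1 - β) with hD
  have hβD : β * D + L * Lbar = D := by rw [hD]; field_simp; ring
  set D₀ : ℝ := MN + A with hD₀
  have key3 : ∀ n : ℕ, ∀ z : Z, |JN z - Jstar z| ≤ D + β ^ n * (D₀ - D) := by
    intro n
    induction n with
    | zero =>
      intro z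
      calc |JN z - Jstar z| ≤ |JN z| + |Jstar z| := abs_sub _ _
        _ ≤ MN + A := add_le_add (hMN z) (hbound z)
        _ = D + β ^ 0 * (D₀ - D) := by rw [hD₀]; ring
    | succ n ih =>
      intro z
      have hterm2 : |Jstar (F z) - Jstar z| ≤ L * Lbar := by
        calc |Jstar (F z) - Jstar z| ≤ L * dist (F z) z := hlip (F z) z
          _ ≤ L * Lbar := by
              rw [dist_comm]
              exact mul_le_mul_of_nonneg_left (hF_close z) hL0
      have hterm1 : |JN z - Jstar (F z)| ≤ β * (D + β ^ n * (D₀ - D)) := by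
        rw [hJN_fix z, hJstar_fix (F z)]
        apply abs_ciInf_sub_ciInf_le
        intro u
        haveI := hη_prob (F z) u
        have hintJN : Integrable JN (η (F z) u) :=
          integrable_of_abs_le _ _ hJN_meas hMN
        have hintJs : Integrable Jstar (η (F z) u) :=
          integrable_of_abs_le _ _ hJstar_meas hbound
        have hI : |(∫ z₁, JN z₁ ∂(η (F z) u)) - ∫ z₁, Jstar z₁ ∂(η (F z) u)|
            ≤ D + β ^ n * (D₀ - D) :=
          abs_integral_sub_integral_le _ _ _ hintJN hintJs ih
        calc |c (F z) u + β * (∫ z₁, JN z₁ ∂(η (F z) u)) -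
                (c (F z) u + β * ∫ z₁, Jstar z₁ ∂(η (F z) u))|
            = β * |(∫ z₁, JN z₁ ∂(η (F z) u)) - ∫ z₁, Jstar z₁ ∂(η (F z) u)| := by
              rw [show c (F z) u + β * (∫ z₁, JN z₁ ∂(η (F z) u)) -
                  (c (F z) u + β * ∫ z₁, Jstar z₁ ∂(η (F z) u))
                  = β * ((∫ z₁, JN z₁ ∂(η (F z) u)) - ∫ z₁, Jstar z₁ ∂(η (F z) u)) from by
                ring, abs_mul, abs_of_nonneg hβ0.le]
          _ ≤ β * (D + β ^ n * (D₀ - D)) :=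
              mul_le_mul_of_nonneg_left hI hβ0.le
      calc |JN z - Jstar z|
          ≤ |JN z - Jstar (F z)| + |Jstar (F z) - Jstar z| := abs_sub_le _ _ _
        _ ≤ β * (D + β ^ n * (D₀ - D)) + L * Lbar :=
            add_le_add hterm1 hterm2
        _ = D + β ^ (n+1) * (D₀ - D) := by linear_combination hβD
  have hfinal : |JN z₀ - Jstar z₀| ≤ D := by
    have h0 : Filter.Tendsto (fun n : ℕ => β ^ n) Filter.atTop (nhds 0) :=
      tendsto_pow_atTop_nhds_zero_of_lt_one hβ0.le hβ1
    have ht : Filter.Tendsto (fun n : ℕ => D + β ^ n * (D₀ - D)) Filter.atTop (nhds D) := by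
      simpa using (tendsto_const_nhds (x := D)).add (h0.mul_const (D₀ - D))
    exact ge_of_tendsto ht (Filter.Eventually.of_forall fun n => key3 n z₀)
  have hDeq : D = ((αZ - 1) * β + 1) / ((1 - β) ^ 2 * (1 - αZ * β)) * K * Lbar := by
    rw [hD, hL, hA]
    have h1 : (1 : ℝ) - β ≠ 0 := ne_of_gt h1β
    have h2 : (1 : ℝ) - β * αZ ≠ 0 := ne_of_gt h1βα
    have h3 : (1 : ℝ) - αZ * β ≠ 0 := by rw [mul_comm]; exact h2
    field_simp
    ring
  rw [← hDeq]
  exact hfinal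
end

section
/- Let (Z,d) be a metric space, U a finite nonempty set, β ∈ (0,1) with βα_Z < 1, c : Z×U → ℝ bounded measurable with |c(z,u) − c(z',u)| ≤ ‖c‖_∞ d(z,z') for all z, z' ∈ Z and u ∈ U, and let η be a Markov kernel from Z×U to Z satisfying the bounded-Lipschitz contraction condition with constant α_Z. Let F : Z → Z be measurable with sup_{z∈Z} d(z, F(z)) ≤ L̄ < ∞. Let J* : Z → ℝ be a bounded Lipschitz function satisfying J*(z) = min_{u∈U} ( c(z,u) + β ∫ J*(z₁) η(dz₁|z,u) ) for all z, let J^N : Z → ℝ be a bounded measurable function satisfying J^N(z) = min_{u∈U} ( c(F(z),u) + β ∫ J^N(z₁) η(dz₁|F(z),u) ) for all z, let γ_N : Z → U be a measurable selector with c(F(z),γ_N(z)) + β ∫ J^N(z₁) η(dz₁|F(z),γ_N(z)) = J^N(z) for all z, and let J_{γ_N} : Z → ℝ be a bounded measurable function satisfying J_{γ_N}(z) = c(z,γ_N(z)) + β ∫ J_{γ_N}(z₁) η(dz₁|z,γ_N(z)) for all z. Then sup_{z∈Z} |J_{γ_N}(z) − J*(z)| ≤ ( 2(1 + (α_Z −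 1)β) / ((1 − β)³ (1 − α_Z β)) ) ‖c‖_∞ L̄. -/
open MeasureTheory

open MeasureTheory Filter

section helpers

lemma inf_attained {U : Type*} [Fintype U] [Nonempty U] (f : U → ℝ) :
    ∃ u : U, (⨅ v : U, f v) = f u ∧ ∀ v : U, f u ≤ f v := by
  obtain ⟨u, hu⟩ := Finite.exists_min f
  exact ⟨u, le_antisymm (ciInf_le (Set.Finite.bddBelow (Set.finite_range f)) u)
    (le_ciInf hu), hu⟩

lemma ciInf_le'' {U : Type*} [Fintype U] [Nonempty U] (f : U → ℝ) (u : U) :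
    (⨅ v : U, f v) ≤ f u :=
  ciInf_le (Set.Finite.bddBelow (Set.finite_range f)) u

lemma abs_inf_le {U : Type*} [Fintype U] [Nonempty U] (f : U → ℝ) (K : ℝ)
    (h : ∀ u, |f u| ≤ K) : |⨅ u : U, f u| ≤ K := by
  obtain ⟨u, hu, -⟩ := inf_attained f
  rw [hu]; exact h u

lemma abs_inf_sub_inf_le {U : Type*} [Fintype U] [Nonempty U] (f g : U → ℝ) (K : ℝ)
    (h : ∀ u, |f u - g u| ≤ K) : |(⨅ u : U, f u) - ⨅ u : U, g u| ≤ K := by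
  rw [abs_sub_le_iff]
  constructor
  · obtain ⟨u, hu, -⟩ := inf_attained g
    rw [hu]
    calc (⨅ v : U, f v) - g u ≤ f u - g u := by linarith [ciInf_le'' f u]
      _ ≤ K := by have := h u; rw [abs_sub_le_iff] at this; exact this.1
  · obtain ⟨u, hu, -⟩ := inf_attained f
    rw [hu]
    calc (⨅ v : U, g v) - f u ≤ g u - f u := by linarith [ciInf_le'' g u]
      _ ≤ K := by have := h u; rw [abs_sub_le_iff] at this; exact this.2

/-- Iteration-to-the-limit lemma: if a bound of the form `M·w` self-improves to
`(r·M+s)·w` with `r < 1`, then `s/(1-r)·w` is a bound. -/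
lemma iter_bound {ι : Type*} (g w : ι → ℝ) (hw : ∀ i, 0 ≤ w i)
    (r s M₀ : ℝ) (hr0 : 0 ≤ r) (hr1 : r < 1) (hM₀ : 0 ≤ M₀) (hs : 0 ≤ s)
    (h₀ : ∀ i, g i ≤ M₀ * w i)
    (hstep : ∀ M, 0 ≤ M → (∀ i, g i ≤ M * w i) → ∀ i, g i ≤ (r * M + s) * w i) :
    ∀ i, g i ≤ s / (1 - r) * w i := by
  have h1r : (0:ℝ) < 1 - r := by linarith
  set L := s / (1 - r) with hL
  have hL0 : 0 ≤ L := div_nonneg hs (le_of_lt h1r)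
  have hs' : s = L * (1 - r) := by rw [hL, div_mul_cancel₀ s (ne_of_gt h1r)]
  set M : ℕ → ℝ := fun n => L + r ^ n * (M₀ - L) with hM
  have hMnn : ∀ n, 0 ≤ M n := by
    intro n
    rcases le_total L M₀ with h | h
    · have : 0 ≤ r ^ n * (M₀ - L) := mul_nonneg (pow_nonneg hr0 n) (by linarith)
      simp only [hM]; linarith
    · have hrn1 : r ^ n ≤ 1 := pow_le_one₀ hr0 (le_of_lt hr1)
      have : r ^ n * (M₀ - L) ≥ 1 * (M₀ - L) :=
        mul_le_mul_of_nonpos_right hrn1 (by linarith)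
      simp only [hM]; nlinarith
  have hbnd : ∀ n i, g i ≤ M n * w i := by
    intro n
    induction n with
    | zero => simpa [hM] using h₀
    | succ n ih =>
      have := hstep (M n) (hMnn n) ih
      have heq : r * M n + s = M (n + 1) := by
        simp only [hM]; rw [hs']; ring
      rwa [heq] at this
  intro i
  have htend : Tendsto (fun n => M n * w i) atTop (nhds (L * w i)) := by
    have h1 : Tendsto (fun n : ℕ => r ^ n) atTop (nhds 0) :=
      tendsto_pow_atTop_nhds_zero_of_lt_one hr0 hr1
    have h2 : Tendsto M atTop (nhds (L + 0 * (M₀ - L))) :=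
      tendsto_const_nhds.add (h1.mul_const _)
    simpa using h2.mul_const (w i)
  exact ge_of_tendsto' htend (fun n => hbnd n i)

lemma integrable_of_bdd {Z : Type*} [MeasurableSpace Z] {μ : Measure Z}
    [IsProbabilityMeasure μ] {f : Z → ℝ} (hf : Measurable f) {M : ℝ}
    (h : ∀ z, |f z| ≤ M) : Integrable f μ :=
  (integrable_const M).mono' hf.aestronglyMeasurable
    (Filter.Eventually.of_forall fun z => by simpa using h z)

lemma abs_integral_le' {Z : Type*} [MeasurableSpace Z] (μ : Measure Z)
    [IsProbabilityMeasure μ] (f : Z → ℝ) (M : ℝ) (h : ∀ z, |f z| ≤ M) :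
    |∫ z, f z ∂μ| ≤ M := by
  have := norm_integral_le_of_norm_le_const (μ := μ) (f := f) (C := M)
    (Filter.Eventually.of_forall fun z => by simpa using h z)
  simpa using this

lemma abs_integral_sub_le {Z : Type*} [MeasurableSpace Z] (μ : Measure Z)
    [IsProbabilityMeasure μ] (f g : Z → ℝ) (hf : Measurable f) (hg : Measurable g)
    (Mf Mg : ℝ) (hbf : ∀ z, |f z| ≤ Mf) (hbg : ∀ z, |g z| ≤ Mg)
    (M : ℝ) (h : ∀ z, |f z - g z| ≤ M) :
    |(∫ z, f z ∂μ) - ∫ z, g z ∂μ| ≤ M := by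
  rw [← integral_sub (integrable_of_bdd hf hbf) (integrable_of_bdd hg hbg)]
  exact abs_integral_le' μ (fun z => f z - g z) M h

end helpers

set_option maxHeartbeats 1600000 in
theorem statement11 {Z U : Type*} [MetricSpace Z] [MeasurableSpace Z] [BorelSpace Z]
    [Fintype U] [Nonempty U] [MeasurableSpace U]
    (β : ℝ) (hβ0 : 0 < β) (hβ1 : β < 1)
    (c : Z → U → ℝ)
    (hc_meas : ∀ u : U, Measurable fun z : Z => c z u)
    (hc_bdd : ∃ M : ℝ, ∀ (z : Z) (u : U), |c z u| ≤ M)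
    (hc_lip : ∀ (z z' : Z) (u : U), |c z u - c z' u| ≤ supNorm c * dist z z')
    (η : Z → U → MeasureTheory.Measure Z)
    (hη_meas : ∀ u : U, Measurable fun z : Z => η z u)
    (hη_prob : ∀ (z : Z) (u : U), MeasureTheory.IsProbabilityMeasure (η z u))
    (αZ : ℝ) (hαZ : 0 ≤ αZ)
    (hη_contract : blContract η αZ)
    (hβαZ : β * αZ < 1)
    (F : Z → Z) (hF_meas : Measurable F)
    (Lbar : ℝ) (hF_close : ∀ z : Z, dist z (F z) ≤ Lbar)
    (Jstar : Z → ℝ)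
    (hJstar_bl : ∃ C : ℝ, blNormLE dist Jstar C)
    (hJstar_fix : ∀ z : Z, Jstar z = ⨅ u : U, (c z u + β * ∫ z₁, Jstar z₁ ∂(η z u)))
    (JN : Z → ℝ)
    (hJN_meas : Measurable JN)
    (hJN_bdd : ∃ M : ℝ, ∀ z : Z, |JN z| ≤ M)
    (hJN_fix : ∀ z : Z, JN z = ⨅ u : U, (c (F z) u + β * ∫ z₁, JN z₁ ∂(η (F z) u)))
    (γN : Z → U) (hγN_meas : Measurable γN)
    (hγN_sel : ∀ z : Z,
      c (F z) (γN z) + β * ∫ z₁, JN z₁ ∂(η (F z) (γN z)) = JN z)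
    (JγN : Z → ℝ)
    (hJγN_meas : Measurable JγN)
    (hJγN_bdd : ∃ M : ℝ, ∀ z : Z, |JγN z| ≤ M)
    (hJγN_fix : ∀ z : Z,
      JγN z = c z (γN z) + β * ∫ z₁, JγN z₁ ∂(η z (γN z))) :
    ∀ z : Z, |JγN z - Jstar z| ≤
      2 * (1 + (αZ - 1) * β) / ((1 - β) ^ 3 * (1 - αZ * β)) * supNorm c * Lbar := by
  intro z₀
  haveI : ∀ (z : Z) (u : U), IsProbabilityMeasure (η z u) := hη_prob
  set k := supNorm c with hk
  -- basic positivity facts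
  have h1β : (0:ℝ) < 1 - β := by linarith
  have h1αβ : (0:ℝ) < 1 - β * αZ := by linarith
  have h1αβ' : (0:ℝ) < 1 - αZ * β := by rw [mul_comm]; exact h1αβ
  -- supNorm bound
  obtain ⟨Mc, hMc⟩ := hc_bdd
  have hk_ub : ∀ (z : Z) (u : U), |c z u| ≤ k := by
    intro z u
    have : |c (z, u).1 (z, u).2| ≤ ⨆ p : Z × U, |c p.1 p.2| :=
      le_ciSup (f := fun p : Z × U => |c p.1 p.2|)
        ⟨Mc, by rintro _ ⟨p, rfl⟩; exact hMc p.1 p.2⟩ (z, u)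
    exact this
  have hk0 : 0 ≤ k := le_trans (abs_nonneg _) (hk_ub z₀ (Classical.arbitrary U))
  have hL0 : 0 ≤ Lbar := le_trans dist_nonneg (hF_close z₀)
  -- Jstar is measurable (it is Lipschitz)
  obtain ⟨C₀, a₀, b₀, ha₀, hb₀, hab₀, hJa₀, hJb₀⟩ := hJstar_bl
  have hJstar_cont : Continuous Jstar := by
    have : LipschitzWith ⟨b₀, hb₀⟩ Jstar := by
      apply LipschitzWith.of_dist_le_mul
      intro x y
      rw [Real.dist_eq]
      exact hJb₀ x y
    exact this.continuous
  have hJstar_meas : Measurable Jstar := hJstar_cont.measurable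
  -- Step A: sup bound on Jstar
  have hstepA : ∀ M, 0 ≤ M → (∀ z : Z, |Jstar z| ≤ M * 1) →
      ∀ z : Z, |Jstar z| ≤ (β * M + k) * 1 := by
    intro M hM hb z
    rw [mul_one, hJstar_fix z]
    apply abs_inf_le
    intro u
    have h1 : |c z u| ≤ k := hk_ub z u
    have h2 : |∫ z₁, Jstar z₁ ∂(η z u)| ≤ M :=
      abs_integral_le' _ _ M (fun z₁ => by simpa using hb z₁)
    calc |c z u + β * ∫ z₁, Jstar z₁ ∂(η z u)|
        ≤ |c z u| + |β * ∫ z₁, Jstar z₁ ∂(η z u)| := abs_add_le _ _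
      _ ≤ k + β * M := by
          rw [abs_mul, abs_of_pos hβ0]
          exact add_le_add h1 (mul_le_mul_of_nonneg_left h2 (le_of_lt hβ0))
      _ = β * M + k := by ring
  have hJstar_bd' : ∀ z : Z, |Jstar z| ≤ k / (1 - β) * 1 :=
    iter_bound (fun z => |Jstar z|) (fun _ => 1) (fun _ => zero_le_one)
      β k a₀ (le_of_lt hβ0) hβ1 ha₀ hk0 (fun z => by simpa using hJa₀ z) hstepA
  set a := k / (1 - β) with ha_def
  have ha0 : 0 ≤ a := div_nonneg hk0 (le_of_lt h1β)
  have hJstar_bd : ∀ z : Z, |Jstar z| ≤ a := fun z => by simpa using hJstar_bd' z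
  -- Step B: Lipschitz bound on Jstar
  have hstepB : ∀ M, 0 ≤ M →
      (∀ p : Z × Z, |Jstar p.1 - Jstar p.2| ≤ M * dist p.1 p.2) →
      ∀ p : Z × Z, |Jstar p.1 - Jstar p.2| ≤ (β * αZ * M + (k + β * αZ * a)) * dist p.1 p.2 := by
    intro M hM hb p
    obtain ⟨z, z'⟩ := p
    have hbl : blNormLE dist Jstar (a + M) :=
      ⟨a, M, ha0, hM, le_refl _, hJstar_bd, fun x y => hb (x, y)⟩
    simp only
    rw [hJstar_fix z, hJstar_fix z']
    apply abs_inf_sub_inf_le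
    intro u
    have h1 : |c z u - c z' u| ≤ k * dist z z' := hc_lip z z' u
    have h2 : |(∫ x, Jstar x ∂(η z u)) - ∫ x, Jstar x ∂(η z' u)| ≤
        αZ * (a + M) * dist z z' := hη_contract Jstar (a + M) hbl u z z'
    calc |c z u + β * ∫ x, Jstar x ∂(η z u) - (c z' u + β * ∫ x, Jstar x ∂(η z' u))|
        = |(c z u - c z' u) + β * ((∫ x, Jstar x ∂(η z u)) - ∫ x, Jstar x ∂(η z' u))| := by
          congr 1; ring
      _ ≤ |c z u - c z' u| + |β * ((∫ x, Jstar x ∂(η z u)) - ∫ x, Jstar x ∂(η z' u))| :=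
          abs_add_le _ _
      _ ≤ k * dist z z' + β * (αZ * (a + M) * dist z z') := by
          rw [abs_mul, abs_of_pos hβ0]
          exact add_le_add h1 (mul_le_mul_of_nonneg_left h2 (le_of_lt hβ0))
      _ = (β * αZ * M + (k + β * αZ * a)) * dist z z' := by ring
  have hJstar_lip' : ∀ p : Z × Z, |Jstar p.1 - Jstar p.2| ≤
      (k + β * αZ * a) / (1 - β * αZ) * dist p.1 p.2 :=
    iter_bound (fun p : Z × Z => |Jstar p.1 - Jstar p.2|) (fun p => dist p.1 p.2)
      (fun p => dist_nonneg) (β * αZ) (k + β * αZ * a) b₀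
      (mul_nonneg (le_of_lt hβ0) hαZ) hβαZ hb₀
      (by positivity)
      (fun p => hJb₀ p.1 p.2) hstepB
  set ℓ := (k + β * αZ * a) / (1 - β * αZ) with hℓ_def
  have hℓ0 : 0 ≤ ℓ := div_nonneg (by positivity) (le_of_lt h1αβ)
  have hJstar_lip : ∀ z z' : Z, |Jstar z - Jstar z'| ≤ ℓ * dist z z' :=
    fun z z' => hJstar_lip' (z, z')
  -- Step C: bound on |JN - Jstar|
  obtain ⟨MN, hMN⟩ := hJN_bdd
  have hMN0 : 0 ≤ MN := le_trans (abs_nonneg _) (hMN z₀)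
  have hstepC : ∀ M, 0 ≤ M → (∀ z : Z, |JN z - Jstar z| ≤ M * 1) →
      ∀ z : Z, |JN z - Jstar z| ≤ (β * M + ℓ * Lbar) * 1 := by
    intro M hM hb z
    rw [mul_one]
    have h2 : |Jstar (F z) - Jstar z| ≤ ℓ * Lbar := by
      calc |Jstar (F z) - Jstar z| ≤ ℓ * dist (F z) z := hJstar_lip (F z) z
        _ ≤ ℓ * Lbar := by
            rw [dist_comm]
            exact mul_le_mul_of_nonneg_left (hF_close z) hℓ0
    have h1 : |JN z - Jstar (F z)| ≤ β * M := by
      rw [hJN_fix z, hJstar_fix (F z)]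
      apply abs_inf_sub_inf_le
      intro u
      have h3 : |(∫ x, JN x ∂(η (F z) u)) - ∫ x, Jstar x ∂(η (F z) u)| ≤ M := by
        apply abs_integral_sub_le _ _ _ hJN_meas hJstar_meas MN a hMN hJstar_bd
        intro x; simpa using hb x
      calc |c (F z) u + β * ∫ x, JN x ∂(η (F z) u) -
            (c (F z) u + β * ∫ x, Jstar x ∂(η (F z) u))|
          = β * |(∫ x, JN x ∂(η (F z) u)) - ∫ x, Jstar x ∂(η (F z) u)| := by
            rw [show c (F z) u + β * ∫ x, JN x ∂(η (F z) u) -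
              (c (F z) u + β * ∫ x, Jstar x ∂(η (F z) u)) =
              β * ((∫ x, JN x ∂(η (F z) u)) - ∫ x, Jstar x ∂(η (F z) u)) from by ring,
              abs_mul, abs_of_pos hβ0]
        _ ≤ β * M := mul_le_mul_of_nonneg_left h3 (le_of_lt hβ0)
    calc |JN z - Jstar z| ≤ |JN z - Jstar (F z)| + |Jstar (F z) - Jstar z| := by
          have := abs_sub_le (JN z) (Jstar (F z)) (Jstar z); linarith
      _ ≤ β * M + ℓ * Lbar := add_le_add h1 h2
  have hΔ' : ∀ z : Z, |JN z - Jstar z| ≤ ℓ * Lbar / (1 - β) * 1 :=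
    iter_bound (fun z => |JN z - Jstar z|) (fun _ => 1) (fun _ => zero_le_one)
      β (ℓ * Lbar) (MN + a) (le_of_lt hβ0) hβ1 (by linarith) (by positivity)
      (fun z => by
        have := abs_sub (JN z) (Jstar z)
        have h1 := hMN z; have h2 := hJstar_bd z
        rw [mul_one]
        calc |JN z - Jstar z| ≤ |JN z| + |Jstar z| := abs_sub _ _
          _ ≤ MN + a := add_le_add h1 h2) hstepC
  set Δ := ℓ * Lbar / (1 - β) with hΔ_def
  have hΔ0 : 0 ≤ Δ := by positivity
  have hΔ : ∀ z : Z, |JN z - Jstar z| ≤ Δ := fun z => by simpa using hΔ' z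
  -- Step D: final bound on |JγN - Jstar|
  obtain ⟨Mγ, hMγ⟩ := hJγN_bdd
  have hMγ0 : 0 ≤ Mγ := le_trans (abs_nonneg _) (hMγ z₀)
  set s := k * Lbar + β * αZ * (a + ℓ) * Lbar + (1 + β) * Δ with hs_def
  have hs0 : 0 ≤ s := by positivity
  have hblJ : blNormLE dist Jstar (a + ℓ) :=
    ⟨a, ℓ, ha0, hℓ0, le_refl _, hJstar_bd, hJstar_lip⟩
  have hstepD : ∀ M, 0 ≤ M → (∀ z : Z, |JγN z - Jstar z| ≤ M * 1) →
      ∀ z : Z, |JγN z - Jstar z| ≤ (β * M + s) * 1 := by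
    intro M hM hb z
    rw [mul_one]
    set B := c z (γN z) + β * (∫ x, Jstar x ∂(η z (γN z))) - Jstar z with hB_def
    have hB0 : 0 ≤ B := by
      have : Jstar z ≤ c z (γN z) + β * ∫ x, Jstar x ∂(η z (γN z)) := by
        rw [hJstar_fix z]
        exact ciInf_le'' (fun u => c z u + β * ∫ x, Jstar x ∂(η z u)) (γN z)
      simp only [hB_def]; linarith
    have hkey : JγN z - Jstar z =
        β * ((∫ x, JγN x ∂(η z (γN z))) - ∫ x, Jstar x ∂(η z (γN z))) + B := by
      rw [hJγN_fix z, hB_def]; ring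
    have hint : |(∫ x, JγN x ∂(η z (γN z))) - ∫ x, Jstar x ∂(η z (γN z))| ≤ M := by
      apply abs_integral_sub_le _ _ _ hJγN_meas hJstar_meas Mγ a hMγ hJstar_bd
      intro x; simpa using hb x
    -- upper bound for B
    have hBs : B ≤ s := by
      have t1 : c z (γN z) - c (F z) (γN z) ≤ k * Lbar := by
        have := hc_lip z (F z) (γN z)
        have h2 : k * dist z (F z) ≤ k * Lbar :=
          mul_le_mul_of_nonneg_left (hF_close z) hk0
        have := abs_le.mp this
        linarith [this.2]
      have t2 : (∫ x, Jstar x ∂(η z (γN z))) - ∫ x, Jstar x ∂(η (F z) (γN z)) ≤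
          αZ * (a + ℓ) * Lbar := by
        have h1 := hη_contract Jstar (a + ℓ) hblJ (γN z) z (F z)
        have h2 : αZ * (a + ℓ) * dist z (F z) ≤ αZ * (a + ℓ) * Lbar :=
          mul_le_mul_of_nonneg_left (hF_close z) (by positivity)
        have := abs_le.mp h1
        linarith [this.2]
      have t3 : c (F z) (γN z) + β * (∫ x, Jstar x ∂(η (F z) (γN z))) - Jstar z ≤
          (1 + β) * Δ := by
        have hsel := hγN_sel z
        have h4 : |(∫ x, Jstar x ∂(η (F z) (γN z))) - ∫ x, JN x ∂(η (F z) (γN z))| ≤ Δ := by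
          apply abs_integral_sub_le _ _ _ hJstar_meas hJN_meas a MN hJstar_bd hMN
          intro x
          have := hΔ x
          rw [abs_sub_comm] at this
          exact this
        have h5 := (abs_le.mp h4).2
        have h6 := (abs_le.mp (hΔ z)).2
        -- c(Fz,γNz) + β∫Jstar = JN z + β(∫Jstar - ∫JN)
        have h7 : c (F z) (γN z) + β * (∫ x, Jstar x ∂(η (F z) (γN z))) =
            JN z + β * ((∫ x, Jstar x ∂(η (F z) (γN z))) - ∫ x, JN x ∂(η (F z) (γN z))) := by
          rw [← hsel]; ring
        rw [h7]
        have h8 : β * ((∫ x, Jstar x ∂(η (F z) (γN z))) - ∫ x, JN x ∂(η (F z) (γN z))) ≤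
            β * Δ := mul_le_mul_of_nonneg_left h5 (le_of_lt hβ0)
        nlinarith
      have hdecomp : B = (c z (γN z) - c (F z) (γN z)) +
          β * ((∫ x, Jstar x ∂(η z (γN z))) - ∫ x, Jstar x ∂(η (F z) (γN z))) +
          (c (F z) (γN z) + β * (∫ x, Jstar x ∂(η (F z) (γN z))) - Jstar z) := by
        rw [hB_def]; ring
      have t2' : β * ((∫ x, Jstar x ∂(η z (γN z))) - ∫ x, Jstar x ∂(η (F z) (γN z))) ≤
          β * (αZ * (a + ℓ) * Lbar) := mul_le_mul_of_nonneg_left t2 (le_of_lt hβ0)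
      rw [hdecomp, hs_def]
      nlinarith
    rw [hkey]
    calc |β * ((∫ x, JγN x ∂(η z (γN z))) - ∫ x, Jstar x ∂(η z (γN z))) + B|
        ≤ |β * ((∫ x, JγN x ∂(η z (γN z))) - ∫ x, Jstar x ∂(η z (γN z)))| + |B| :=
          abs_add_le _ _
      _ ≤ β * M + s := by
          rw [abs_mul, abs_of_pos hβ0, abs_of_nonneg hB0]
          exact add_le_add (mul_le_mul_of_nonneg_left hint (le_of_lt hβ0)) hBs
  have hfinal : ∀ z : Z, |JγN z - Jstar z| ≤ s / (1 - β) * 1 :=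
    iter_bound (fun z => |JγN z - Jstar z|) (fun _ => 1) (fun _ => zero_le_one)
      β s (Mγ + a) (le_of_lt hβ0) hβ1 (by linarith) hs0
      (fun z => by
        rw [mul_one]
        calc |JγN z - Jstar z| ≤ |JγN z| + |Jstar z| := abs_sub _ _
          _ ≤ Mγ + a := add_le_add (hMγ z) (hJstar_bd z)) hstepD
  have hz := hfinal z₀
  rw [mul_one] at hz
  refine le_trans hz (le_of_eq ?_)
  rw [hs_def, hΔ_def, hℓ_def, ha_def]
  field_simp
  ring
end

section
/- Let (Z,d) be a metric space, U a finite nonempty set, β ∈ (0,1) with βα_Z < 1, c : Z×U → ℝ bounded measurable with |c(z,u) − c(z',u)| ≤ ‖c‖_∞ d(z,z') for all z, z' ∈ Z and u ∈ U, and let η be a Markov kernel from Z×U to Z satisfying the bounded-Lipschitz contraction condition with constant α_Z. Let F : Z → Z be measurable with sup_{z∈Z} d(z, F(z)) ≤ L̄ < ∞. Let J* : Z → ℝ be a bounded Lipschitz function satisfying J*(z) = min_{u∈U} ( c(z,u) + β ∫ J*(z₁) η(dz₁|z,u) ) for all z, let J^N : Z → ℝ be a bounded measurable function satisfying J^N(z)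 = min_{u∈U} ( c(F(z),u) + β ∫ J^N(z₁) η(dz₁|F(z),u) ) for all z, let γ_N : Z → U be a measurable selector with c(F(z),γ_N(z)) + β ∫ J^N(z₁) η(dz₁|F(z),γ_N(z)) = J^N(z) for all z, and let J_{γ_N} : Z → ℝ be a bounded measurable function satisfying J_{γ_N}(z) = c(z,γ_N(z)) + β ∫ J_{γ_N}(z₁) η(dz₁|z,γ_N(z)) for all z. Then sup_{z∈Z} |J_{γ_N}(z) − J^N(z)| ≤ ( (1 + β)((α_Z − 1)β + 1) / ((1 − β)³ (1 − α_Z β)) ) ‖c‖_∞ L̄. -/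
open MeasureTheory

section Aux

open Filter Topology

/-- Difference of finite infima is controlled by a uniform pointwise bound. -/
lemma aux_inf_diff {U : Type*} [Fintype U] [Nonempty U] (f g : U → ℝ) (D : ℝ)
    (h : ∀ u, |f u - g u| ≤ D) : |(⨅ u, f u) - ⨅ u, g u| ≤ D := by
  rw [abs_sub_le_iff]
  constructor
  · obtain ⟨u, hu⟩ := exists_eq_ciInf_of_finite (f := g)
    have h1 : (⨅ v, f v) ≤ f u := ciInf_le (Finite.bddBelow_range f) u
    have h2 := (abs_le.mp (h u)).2
    rw [← hu]; linarith
  · obtain ⟨u, hu⟩ := exists_eq_ciInf_of_finite (f := f)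
    have h1 : (⨅ v, g v) ≤ g u := ciInf_le (Finite.bddBelow_range g) u
    have h2 := (abs_le.mp (h u)).1
    rw [← hu]; linarith

lemma aux_abs_int {Z : Type*} [MeasurableSpace Z] (μ : Measure Z)
    (hp : IsProbabilityMeasure μ)
    (f : Z → ℝ) (C : ℝ) (h : ∀ z, |f z| ≤ C) : |∫ z, f z ∂μ| ≤ C := by
  haveI := hp
  calc |∫ z, f z ∂μ| = ‖∫ z, f z ∂μ‖ := (Real.norm_eq_abs _).symm
  _ ≤ C * (μ Set.univ).toReal :=
      norm_integral_le_of_norm_le_const (Filter.Eventually.of_forall fun z => by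
        rw [Real.norm_eq_abs]; exact h z)
  _ = C := by simp

lemma aux_integrable {Z : Type*} [MeasurableSpace Z] (μ : Measure Z)
    (hp : IsProbabilityMeasure μ)
    (f : Z → ℝ) (hf : Measurable f) (C : ℝ) (h : ∀ z, |f z| ≤ C) : Integrable f μ := by
  haveI := hp
  refine Integrable.mono' (integrable_const C) hf.aestronglyMeasurable
    (Filter.Eventually.of_forall fun z => ?_)
  rw [Real.norm_eq_abs]; exact h z

end Aux

theorem statement12 {Z U : Type*} [MetricSpace Z] [MeasurableSpace Z] [BorelSpace Z]
    [Fintype U] [Nonempty U] [MeasurableSpace U]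
    (β : ℝ) (hβ0 : 0 < β) (hβ1 : β < 1)
    (c : Z → U → ℝ)
    (hc_meas : ∀ u : U, Measurable fun z : Z => c z u)
    (hc_bdd : ∃ M : ℝ, ∀ (z : Z) (u : U), |c z u| ≤ M)
    (hc_lip : ∀ (z z' : Z) (u : U), |c z u - c z' u| ≤ supNorm c * dist z z')
    (η : Z → U → MeasureTheory.Measure Z)
    (hη_meas : ∀ u : U, Measurable fun z : Z => η z u)
    (hη_prob : ∀ (z : Z) (u : U), MeasureTheory.IsProbabilityMeasure (η z u))
    (αZ : ℝ) (hαZ : 0 ≤ αZ)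
    (hη_contract : blContract η αZ)
    (hβαZ : β * αZ < 1)
    (F : Z → Z) (hF_meas : Measurable F)
    (Lbar : ℝ) (hF_close : ∀ z : Z, dist z (F z) ≤ Lbar)
    (Jstar : Z → ℝ)
    (hJstar_bl : ∃ C : ℝ, blNormLE dist Jstar C)
    (hJstar_fix : ∀ z : Z, Jstar z = ⨅ u : U, (c z u + β * ∫ z₁, Jstar z₁ ∂(η z u)))
    (JN : Z → ℝ)
    (hJN_meas : Measurable JN)
    (hJN_bdd : ∃ M : ℝ, ∀ z : Z, |JN z| ≤ M)
    (hJN_fix : ∀ z : Z, JN z = ⨅ u : U, (c (F z) u + β * ∫ z₁, JN z₁ ∂(η (F z) u)))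
    (γN : Z → U) (hγN_meas : Measurable γN)
    (hγN_sel : ∀ z : Z,
      c (F z) (γN z) + β * ∫ z₁, JN z₁ ∂(η (F z) (γN z)) = JN z)
    (JγN : Z → ℝ)
    (hJγN_meas : Measurable JγN)
    (hJγN_bdd : ∃ M : ℝ, ∀ z : Z, |JγN z| ≤ M)
    (hJγN_fix : ∀ z : Z,
      JγN z = c z (γN z) + β * ∫ z₁, JγN z₁ ∂(η z (γN z))) :
    ∀ z : Z, |JγN z - JN z| ≤
      (1 + β) * ((αZ - 1) * β + 1) / ((1 - β) ^ 3 * (1 - αZ * β)) * supNorm c * Lbar := by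
  intro z0
  haveI hZne : Nonempty Z := ⟨z0⟩
  obtain ⟨M0, hM0b⟩ := hc_bdd
  set M := supNorm c with hMdef
  have hbdd_c : BddAbove (Set.range fun p : Z × U => |c p.1 p.2|) :=
    ⟨M0, by rintro x ⟨p, rfl⟩; exact hM0b p.1 p.2⟩
  have hM : ∀ z u, |c z u| ≤ M := fun z u => le_ciSup hbdd_c (z, u)
  have hMpos : 0 ≤ M := le_trans (abs_nonneg _) (hM z0 (Classical.arbitrary U))
  have hL0 : 0 ≤ Lbar := le_trans dist_nonneg (hF_close z0)
  have h1β : 0 < 1 - β := by linarith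
  have hs0 : 0 ≤ β * αZ := by positivity
  have h1s : 0 < 1 - β * αZ := by linarith
  set A := M / (1 - β) with hAdef
  have hA0 : 0 ≤ A := div_nonneg hMpos h1β.le
  set K1 := (M + β * αZ * A) / (1 - β * αZ) with hK1def
  have hK10 : 0 ≤ K1 := div_nonneg (by positivity) h1s.le
  obtain ⟨C0, a0, b0, ha0, hb0, _, hJa, hJb⟩ := hJstar_bl
  -- Jstar is continuous, hence measurable
  have hJstar_cont : Continuous Jstar := by
    have hl : LipschitzWith (Real.toNNReal b0) Jstar := by
      apply LipschitzWith.of_dist_le_mul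
      intro x y
      rw [Real.dist_eq]
      calc |Jstar x - Jstar y| ≤ b0 * dist x y := hJb x y
      _ ≤ Real.toNNReal b0 * dist x y := by
          gcongr; exact Real.le_coe_toNNReal b0
    exact hl.continuous
  have hJstar_meas : Measurable Jstar := hJstar_cont.measurable
  -- integrability
  have hJs_int : ∀ (z : Z) (u : U), Integrable Jstar (η z u) :=
    fun z u => aux_integrable _ (hη_prob z u) _ hJstar_meas a0 hJa
  obtain ⟨MN, hMN⟩ := hJN_bdd
  have hJN_int : ∀ (z : Z) (u : U), Integrable JN (η z u) :=
    fun z u => aux_integrable _ (hη_prob z u) _ hJN_meas MN hMN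
  obtain ⟨Mγ, hMγ⟩ := hJγN_bdd
  have hJγ_int : ∀ (z : Z) (u : U), Integrable JγN (η z u) :=
    fun z u => aux_integrable _ (hη_prob z u) _ hJγN_meas Mγ hMγ
  -- sup bound on Jstar : |Jstar z| ≤ A
  have hbddJ : BddAbove (Set.range fun z : Z => |Jstar z|) :=
    ⟨a0, by rintro x ⟨z, rfl⟩; exact hJa z⟩
  set SJ := ⨆ z : Z, |Jstar z| with hSJdef
  have hSJle : ∀ z, |Jstar z| ≤ SJ := fun z => le_ciSup hbddJ z
  have hSJrec : ∀ z, |Jstar z| ≤ M + β * SJ := by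
    intro z
    obtain ⟨u, hu⟩ := exists_eq_ciInf_of_finite
      (f := fun u : U => c z u + β * ∫ z₁, Jstar z₁ ∂(η z u))
    rw [hJstar_fix z, ← hu]
    have hint : |∫ z₁, Jstar z₁ ∂(η z u)| ≤ SJ := aux_abs_int _ (hη_prob z u) _ _ hSJle
    calc |c z u + β * ∫ z₁, Jstar z₁ ∂(η z u)|
        ≤ |c z u| + |β * ∫ z₁, Jstar z₁ ∂(η z u)| := abs_add_le _ _
    _ = |c z u| + β * |∫ z₁, Jstar z₁ ∂(η z u)| := by rw [abs_mul, abs_of_pos hβ0]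
    _ ≤ M + β * SJ := add_le_add (hM z u) (mul_le_mul_of_nonneg_left hint hβ0.le)
  have hAbd : ∀ z, |Jstar z| ≤ A := by
    have hSJA : SJ ≤ A := by
      have h := ciSup_le hSJrec
      rw [hAdef, le_div_iff₀ h1β]
      nlinarith [h]
    exact fun z => (hSJle z).trans hSJA
  -- Lipschitz improvement step
  have hstep : ∀ L : ℝ, 0 ≤ L → (∀ x y, |Jstar x - Jstar y| ≤ L * dist x y) →
      ∀ x y, |Jstar x - Jstar y| ≤ (M + β * αZ * (A + L)) * dist x y := by
    intro L hL hLip x y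
    rw [hJstar_fix x, hJstar_fix y]
    refine aux_inf_diff _ _ _ fun u => ?_
    have hcc := hc_lip x y u
    have hη := hη_contract Jstar (A + L) ⟨A, L, hA0, hL, le_refl _, hAbd, hLip⟩ u x y
    have heq : (c x u + β * ∫ z₁, Jstar z₁ ∂(η x u)) - (c y u + β * ∫ z₁, Jstar z₁ ∂(η y u))
        = (c x u - c y u) + β * ((∫ z₁, Jstar z₁ ∂(η x u)) - ∫ z₁, Jstar z₁ ∂(η y u)) := by
      ring
    rw [heq]
    calc |(c x u - c y u) + β * ((∫ z₁, Jstar z₁ ∂(η x u)) - ∫ z₁, Jstar z₁ ∂(η y u))|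
        ≤ |c x u - c y u| + |β * ((∫ z₁, Jstar z₁ ∂(η x u)) - ∫ z₁, Jstar z₁ ∂(η y u))| :=
          abs_add_le _ _
    _ = |c x u - c y u| + β * |(∫ z₁, Jstar z₁ ∂(η x u)) - ∫ z₁, Jstar z₁ ∂(η y u)| := by
          rw [abs_mul, abs_of_pos hβ0]
    _ ≤ M * dist x y + β * (αZ * (A + L) * dist x y) :=
          add_le_add hcc (mul_le_mul_of_nonneg_left hη hβ0.le)
    _ = (M + β * αZ * (A + L)) * dist x y := by ring
  -- iterate to get Lipschitz constant K1
  have hiter : ∀ n : ℕ, ∀ x y, |Jstar x - Jstar y| ≤ ((β * αZ) ^ n * b0 + K1) * dist x y := by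
    intro n
    induction n with
    | zero =>
      intro x y
      simp only [pow_zero, one_mul]
      calc |Jstar x - Jstar y| ≤ b0 * dist x y := hJb x y
      _ ≤ (b0 + K1) * dist x y := by nlinarith [dist_nonneg (x := x) (y := y)]
    | succ n ih =>
      intro x y
      have hLn : 0 ≤ (β * αZ) ^ n * b0 + K1 := by positivity
      have h := hstep _ hLn ih x y
      have heq : M + β * αZ * (A + ((β * αZ) ^ n * b0 + K1))
          = (β * αZ) ^ (n + 1) * b0 + K1 := by
        rw [hK1def]
        field_simp
        ring
      rw [heq] at h
      exact h
  have hK1lip : ∀ x y, |Jstar x - Jstar y| ≤ K1 * dist x y := by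
    intro x y
    have htend : Filter.Tendsto (fun n : ℕ => ((β * αZ) ^ n * b0 + K1) * dist x y)
        Filter.atTop (nhds ((0 * b0 + K1) * dist x y)) :=
      (((tendsto_pow_atTop_nhds_zero_of_lt_one hs0 hβαZ).mul_const b0).add_const K1).mul_const _
    have := ge_of_tendsto' htend (fun n => hiter n x y)
    simpa using this
  -- bound on |JN - Jstar|
  have habs_sub : ∀ (f g : Z → ℝ) (z : Z), |f z - g z| ≤ |f z| + |g z| := by
    intro f g z
    calc |f z - g z| = |f z + -(g z)| := by ring_nf
    _ ≤ |f z| + |-(g z)| := abs_add_le _ _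
    _ = |f z| + |g z| := by rw [abs_neg]
  have hbddT : BddAbove (Set.range fun z : Z => |JN z - Jstar z|) :=
    ⟨MN + A, by rintro x ⟨z, rfl⟩
                exact (habs_sub JN Jstar z).trans (add_le_add (hMN z) (hAbd z))⟩
  set T := ⨆ z : Z, |JN z - Jstar z| with hTdef
  have hTle : ∀ z, |JN z - Jstar z| ≤ T := fun z => le_ciSup hbddT z
  have hTrec : ∀ z, |JN z - Jstar z| ≤ β * T + K1 * Lbar := by
    intro z
    have h1 : |JN z - Jstar (F z)| ≤ β * T := by
      rw [hJN_fix z, hJstar_fix (F z)]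
      refine aux_inf_diff _ _ _ fun u => ?_
      have heq : (c (F z) u + β * ∫ z₁, JN z₁ ∂(η (F z) u))
          - (c (F z) u + β * ∫ z₁, Jstar z₁ ∂(η (F z) u))
          = β * ((∫ z₁, JN z₁ ∂(η (F z) u)) - ∫ z₁, Jstar z₁ ∂(η (F z) u)) := by ring
      rw [heq, abs_mul, abs_of_pos hβ0]
      refine mul_le_mul_of_nonneg_left ?_ hβ0.le
      rw [← integral_sub (hJN_int _ _) (hJs_int _ _)]
      exact aux_abs_int _ (hη_prob _ _) _ _ hTle
    have h2 : |Jstar (F z) - Jstar z| ≤ K1 * Lbar := by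
      have hd : dist (F z) z ≤ Lbar := by rw [dist_comm]; exact hF_close z
      calc |Jstar (F z) - Jstar z| ≤ K1 * dist (F z) z := hK1lip (F z) z
      _ ≤ K1 * Lbar := mul_le_mul_of_nonneg_left hd hK10
    calc |JN z - Jstar z| = |(JN z - Jstar (F z)) + (Jstar (F z) - Jstar z)| := by ring_nf
    _ ≤ |JN z - Jstar (F z)| + |Jstar (F z) - Jstar z| := abs_add_le _ _
    _ ≤ β * T + K1 * Lbar := add_le_add h1 h2
  set S1 := K1 * Lbar / (1 - β) with hS1def
  have hS10 : 0 ≤ S1 := div_nonneg (by positivity) h1β.le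
  have hS1 : ∀ z, |JN z - Jstar z| ≤ S1 := by
    have hT : T ≤ S1 := by
      have h := ciSup_le hTrec
      rw [hS1def, le_div_iff₀ h1β]
      nlinarith [h]
    exact fun z => (hTle z).trans hT
  -- final contraction estimate for |JγN - JN|
  have hbddG : BddAbove (Set.range fun z : Z => |JγN z - JN z|) :=
    ⟨Mγ + MN, by rintro x ⟨z, rfl⟩
                 exact (habs_sub JγN JN z).trans (add_le_add (hMγ z) (hMN z))⟩
  set SG := ⨆ z : Z, |JγN z - JN z| with hSGdef
  have hGle : ∀ z, |JγN z - JN z| ≤ SG := fun z => le_ciSup hbddG z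
  have hGrec : ∀ z, |JγN z - JN z|
      ≤ M * Lbar + β * SG + β * (αZ * (A + K1) * Lbar + 2 * S1) := by
    intro z
    have e1 := hJγN_fix z
    have e2 := (hγN_sel z).symm
    have key : JγN z - JN z =
        (c z (γN z) - c (F z) (γN z))
      + β * ((∫ z₁, JγN z₁ ∂(η z (γN z))) - ∫ z₁, JN z₁ ∂(η z (γN z)))
      + β * ((∫ z₁, JN z₁ ∂(η z (γN z))) - ∫ z₁, JN z₁ ∂(η (F z) (γN z))) := by
      rw [e1, e2]; ring
    have b1 : |c z (γN z) - c (F z) (γN z)| ≤ M * Lbar :=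
      (hc_lip z (F z) (γN z)).trans (mul_le_mul_of_nonneg_left (hF_close z) hMpos)
    have b2 : |(∫ z₁, JγN z₁ ∂(η z (γN z))) - ∫ z₁, JN z₁ ∂(η z (γN z))| ≤ SG := by
      rw [← integral_sub (hJγ_int _ _) (hJN_int _ _)]
      exact aux_abs_int _ (hη_prob _ _) _ _ hGle
    have b3 : |(∫ z₁, JN z₁ ∂(η z (γN z))) - ∫ z₁, JN z₁ ∂(η (F z) (γN z))|
        ≤ αZ * (A + K1) * Lbar + 2 * S1 := by
      have d1 : (∫ z₁, JN z₁ ∂(η z (γN z))) - ∫ z₁, JN z₁ ∂(η (F z) (γN z))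
          = ((∫ z₁, (JN z₁ - Jstar z₁) ∂(η z (γN z)))
              - ∫ z₁, (JN z₁ - Jstar z₁) ∂(η (F z) (γN z)))
          + ((∫ z₁, Jstar z₁ ∂(η z (γN z))) - ∫ z₁, Jstar z₁ ∂(η (F z) (γN z))) := by
        rw [integral_sub (hJN_int _ _) (hJs_int _ _),
            integral_sub (hJN_int _ _) (hJs_int _ _)]
        ring
      have h3a : |∫ z₁, (JN z₁ - Jstar z₁) ∂(η z (γN z))| ≤ S1 :=
        aux_abs_int _ (hη_prob _ _) _ _ hS1
      have h3b : |∫ z₁, (JN z₁ - Jstar z₁) ∂(η (F z) (γN z))| ≤ S1 :=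
        aux_abs_int _ (hη_prob _ _) _ _ hS1
      have h3c : |(∫ z₁, Jstar z₁ ∂(η z (γN z))) - ∫ z₁, Jstar z₁ ∂(η (F z) (γN z))|
          ≤ αZ * (A + K1) * Lbar := by
        have h := hη_contract Jstar (A + K1)
          ⟨A, K1, hA0, hK10, le_refl _, hAbd, hK1lip⟩ (γN z) z (F z)
        calc |(∫ z₁, Jstar z₁ ∂(η z (γN z))) - ∫ z₁, Jstar z₁ ∂(η (F z) (γN z))|
            ≤ αZ * (A + K1) * dist z (F z) := h
        _ ≤ αZ * (A + K1) * Lbar :=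
            mul_le_mul_of_nonneg_left (hF_close z) (by positivity)
      rw [d1]
      calc |((∫ z₁, (JN z₁ - Jstar z₁) ∂(η z (γN z)))
              - ∫ z₁, (JN z₁ - Jstar z₁) ∂(η (F z) (γN z)))
          + ((∫ z₁, Jstar z₁ ∂(η z (γN z))) - ∫ z₁, Jstar z₁ ∂(η (F z) (γN z)))|
          ≤ |(∫ z₁, (JN z₁ - Jstar z₁) ∂(η z (γN z)))
              - ∫ z₁, (JN z₁ - Jstar z₁) ∂(η (F z) (γN z))|
          + |(∫ z₁, Jstar z₁ ∂(η z (γN z))) - ∫ z₁, Jstar z₁ ∂(η (F z) (γN z))| := abs_add_le _ _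
      _ ≤ (|∫ z₁, (JN z₁ - Jstar z₁) ∂(η z (γN z))|
            + |∫ z₁, (JN z₁ - Jstar z₁) ∂(η (F z) (γN z))|)
          + (αZ * (A + K1) * Lbar) := by
            refine add_le_add ?_ h3c
            calc |(∫ z₁, (JN z₁ - Jstar z₁) ∂(η z (γN z)))
                - ∫ z₁, (JN z₁ - Jstar z₁) ∂(η (F z) (γN z))|
                = |(∫ z₁, (JN z₁ - Jstar z₁) ∂(η z (γN z)))
                  + -(∫ z₁, (JN z₁ - Jstar z₁) ∂(η (F z) (γN z)))| := by ring_nf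
            _ ≤ |∫ z₁, (JN z₁ - Jstar z₁) ∂(η z (γN z))|
                  + |-(∫ z₁, (JN z₁ - Jstar z₁) ∂(η (F z) (γN z)))| := abs_add_le _ _
            _ = _ := by rw [abs_neg]
      _ ≤ αZ * (A + K1) * Lbar + 2 * S1 := by linarith [h3a, h3b]
    rw [key]
    calc |(c z (γN z) - c (F z) (γN z))
        + β * ((∫ z₁, JγN z₁ ∂(η z (γN z))) - ∫ z₁, JN z₁ ∂(η z (γN z)))
        + β * ((∫ z₁, JN z₁ ∂(η z (γN z))) - ∫ z₁, JN z₁ ∂(η (F z) (γN z)))|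
        ≤ |(c z (γN z) - c (F z) (γN z))
            + β * ((∫ z₁, JγN z₁ ∂(η z (γN z))) - ∫ z₁, JN z₁ ∂(η z (γN z)))|
        + |β * ((∫ z₁, JN z₁ ∂(η z (γN z))) - ∫ z₁, JN z₁ ∂(η (F z) (γN z)))| := abs_add_le _ _
    _ ≤ (|c z (γN z) - c (F z) (γN z)|
          + |β * ((∫ z₁, JγN z₁ ∂(η z (γN z))) - ∫ z₁, JN z₁ ∂(η z (γN z)))|)
        + |β * ((∫ z₁, JN z₁ ∂(η z (γN z))) - ∫ z₁, JN z₁ ∂(η (F z) (γN z)))| :=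
          add_le_add_left (abs_add_le _ _) _
    _ = |c z (γN z) - c (F z) (γN z)|
        + β * |(∫ z₁, JγN z₁ ∂(η z (γN z))) - ∫ z₁, JN z₁ ∂(η z (γN z))|
        + β * |(∫ z₁, JN z₁ ∂(η z (γN z))) - ∫ z₁, JN z₁ ∂(η (F z) (γN z))| := by
          rw [abs_mul, abs_mul, abs_of_pos hβ0]
    _ ≤ M * Lbar + β * SG + β * (αZ * (A + K1) * Lbar + 2 * S1) := by
          refine add_le_add (add_le_add b1 ?_) ?_
          · exact mul_le_mul_of_nonneg_left b2 hβ0.le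
          · exact mul_le_mul_of_nonneg_left b3 hβ0.le
  have hSG : SG ≤ (M * Lbar + β * (αZ * (A + K1) * Lbar + 2 * S1)) / (1 - β) := by
    have h := ciSup_le hGrec
    rw [le_div_iff₀ h1β]
    nlinarith [h]
  have hfinal : (M * Lbar + β * (αZ * (A + K1) * Lbar + 2 * S1)) / (1 - β)
      = (1 + β) * ((αZ - 1) * β + 1) / ((1 - β) ^ 3 * (1 - αZ * β)) * M * Lbar := by
    rw [hS1def, hK1def, hAdef]
    have hne1 : (1 - β) ≠ 0 := h1β.ne'
    have hne2 : (1 - β * αZ) ≠ 0 := h1s.ne'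
    have hne3 : (1 - αZ * β) ≠ 0 := by rw [mul_comm]; exact hne2
    field_simp
    ring
  exact (hGle z0).trans (hSG.trans (le_of_eq hfinal))
end
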